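/- arXiv:1104.2242 — 9 statements merged into one kernel-verified Lean document; each statement's English description precedes it below -/
import Mathlib

section
/- Let n ≥ 3 be an integer and m = (n−2)/(n+2). Suppose either ρ = 0 and β > 0 with γ = 2β/(1−m), or ρ = −1 and β > 1/2 with γ = (2β−1)/(1−m) (so that γ > 0 in both cases). If u is a positive smooth radially symmetric solution of ((n−1)/m)·Δ(u^m) + β·(x·∇u) + γ·u = 0 on ℝⁿ, then the scalar curvature R = −(4(n−1)/(n−2))·u^{−1}·Δ(u^m) satisfies R(x) > 0 for every x ∈ ℝⁿ. -/
open Real MeasureTheory Metric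
open scoped Topology RealInnerProductSpace

noncomputable section

/-- Euclidean space ℝⁿ. -/
abbrev Euc (n : ℕ) := EuclideanSpace ℝ (Fin n)

/-- Euclidean Laplacian: sum of pure second derivatives in the coordinate directions. -/
def lap {n : ℕ} (f : Euc n → ℝ) (x : Euc n) : ℝ :=
  ∑ i : Fin n, fderiv ℝ (fun y => fderiv ℝ f y (EuclideanSpace.single i 1)) x
    (EuclideanSpace.single i 1)

/-- The conformally flat Yamabe soliton equation
`((n-1)/m)·Δ(u^m) + β·(x·∇u) + γ·u = 0` on ℝⁿ. -/
def YamabePDE {n : ℕ} (m β γ : ℝ) (u : Euc n → ℝ) : Prop :=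
  ∀ x : Euc n, ((n : ℝ) - 1) / m * lap (fun y => u y ^ m) x
      + β * ⟪x, gradient u x⟫ + γ * u x = 0

/-- A function on ℝⁿ is radially symmetric if it depends only on the norm. -/
def IsRadial {n : ℕ} (u : Euc n → ℝ) : Prop :=
  ∀ x y : Euc n, ‖x‖ = ‖y‖ → u x = u y

/-- Scalar curvature of the conformally flat metric g = u^{4/(n+2)}·dx²:
`R = -(4(n-1)/(n-2))·u⁻¹·Δ(u^m)`. -/
def scalarCurv {n : ℕ} (m : ℝ) (u : Euc n → ℝ) (x : Euc n) : ℝ :=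
  -(4 * ((n : ℝ) - 1) / ((n : ℝ) - 2)) * lap (fun y => u y ^ m) x / u x


section Helpers
variable {n : ℕ}

theorem fderiv2_apply (h : Euc n → ℝ) (hs : ContDiff ℝ (⊤:ℕ∞) h) (p a b : Euc n) :
    fderiv ℝ (fun y => fderiv ℝ h y b) p a = fderiv ℝ (fderiv ℝ h) p a b := by
  have hd : DifferentiableAt ℝ (fderiv ℝ h) p :=
    ((hs.fderiv_right (m := (⊤:ℕ∞)) (by norm_cast)).differentiable
      (by simp)).differentiableAt
  rw [fderiv_clm_apply hd (differentiableAt_const b)]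
  simp

theorem line_deriv (h : Euc n → ℝ) (hs : ContDiff ℝ (⊤:ℕ∞) h) (v : Euc n) (t : ℝ) :
    HasDerivAt (fun s : ℝ => h (s • v)) (fderiv ℝ h (t • v) v) t := by
  have h1 : HasDerivAt (fun s : ℝ => s • v) ((1:ℝ) • v) t := (hasDerivAt_id t).smul_const v
  have h2 : HasFDerivAt h (fderiv ℝ h (t • v)) (t • v) :=
    ((hs.differentiable (by simp)).differentiableAt).hasFDerivAt
  exact (h2.comp_hasDerivAt t h1).congr_deriv (by simp)

theorem line_deriv2 (h : Euc n → ℝ) (hs : ContDiff ℝ (⊤:ℕ∞) h) (v b : Euc n) (t : ℝ) :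
    HasDerivAt (fun s : ℝ => fderiv ℝ h (s • v) b)
      (fderiv ℝ (fderiv ℝ h) (t • v) v b) t := by
  have h1 : HasDerivAt (fun s : ℝ => s • v) ((1:ℝ) • v) t := (hasDerivAt_id t).smul_const v
  have h2 : HasFDerivAt (fderiv ℝ h) (fderiv ℝ (fderiv ℝ h) (t • v)) (t • v) :=
    (((hs.fderiv_right (m := (⊤:ℕ∞)) (by norm_cast)).differentiable
      (by simp)).differentiableAt).hasFDerivAt
  have h3 : HasDerivAt (fun s : ℝ => fderiv ℝ h (s • v)) (fderiv ℝ (fderiv ℝ h) (t • v) v) t := by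
    exact (h2.comp_hasDerivAt t h1).congr_deriv (by simp)
  simpa using h3.clm_apply (hasDerivAt_const t b)

theorem lap_eq_sum_onb (h : Euc n → ℝ) (hs : ContDiff ℝ (⊤:ℕ∞) h) (p : Euc n)
    (b : OrthonormalBasis (Fin n) ℝ (Euc n)) :
    lap h p = ∑ i : Fin n, fderiv ℝ (fderiv ℝ h) p (b i) (b i) := by
  have hd : DifferentiableAt ℝ (fderiv ℝ h) p :=
    ((hs.fderiv_right (m := (⊤:ℕ∞)) (by norm_cast)).differentiable
      (by simp)).differentiableAt
  set D2 := fderiv ℝ (fderiv ℝ h) p with hD2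
  set e : OrthonormalBasis (Fin n) ℝ (Euc n) := EuclideanSpace.basisFun (Fin n) ℝ with he
  have lap_eq : lap h p = ∑ i : Fin n, D2 (e i) (e i) := by
    unfold lap
    refine Finset.sum_congr rfl fun i _ => ?_
    rw [fderiv_clm_apply hd (differentiableAt_const (EuclideanSpace.single i 1))]
    simp [he, EuclideanSpace.basisFun_apply]
    rfl
  rw [lap_eq]
  have expand : ∀ x : Euc n, x = ∑ j : Fin n, ⟪e j, x⟫ • e j := fun x => (e.sum_repr' x).symm
  have bil : ∀ x y : Euc n, D2 x y
      = ∑ j : Fin n, ∑ k : Fin n, ⟪e j, x⟫ * ⟪e k, y⟫ * D2 (e j) (e k) := by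
    intro x y
    conv_lhs => rw [expand x]
    rw [map_sum, ContinuousLinearMap.sum_apply]
    refine Finset.sum_congr rfl fun j _ => ?_
    rw [_root_.map_smul, ContinuousLinearMap.smul_apply, smul_eq_mul]
    conv_lhs => rw [expand y]
    rw [map_sum, Finset.mul_sum]
    refine Finset.sum_congr rfl fun k _ => ?_
    rw [_root_.map_smul, smul_eq_mul]; ring
  have main : ∑ i : Fin n, D2 (b i) (b i) = ∑ j : Fin n, D2 (e j) (e j) := by
    calc ∑ i : Fin n, D2 (b i) (b i)
        = ∑ i : Fin n, ∑ j : Fin n, ∑ k : Fin n, ⟪e j, b i⟫ * ⟪e k, b i⟫ * D2 (e j) (e k) :=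
          Finset.sum_congr rfl fun i _ => bil (b i) (b i)
      _ = ∑ j : Fin n, ∑ k : Fin n, (∑ i : Fin n, ⟪e j, b i⟫ * ⟪b i, e k⟫) * D2 (e j) (e k) := by
          rw [Finset.sum_comm]
          refine Finset.sum_congr rfl fun j _ => ?_
          rw [Finset.sum_comm]
          refine Finset.sum_congr rfl fun k _ => ?_
          rw [Finset.sum_mul]
          exact Finset.sum_congr rfl fun i _ => by rw [real_inner_comm (b i) (e k)]
      _ = ∑ j : Fin n, ∑ k : Fin n, ⟪e j, e k⟫ * D2 (e j) (e k) := by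
          refine Finset.sum_congr rfl fun j _ => Finset.sum_congr rfl fun k _ => ?_
          rw [b.sum_inner_mul_inner]
      _ = ∑ j : Fin n, D2 (e j) (e j) := by
          refine Finset.sum_congr rfl fun j _ => ?_
          rw [Finset.sum_eq_single j]
          · rw [real_inner_self_eq_norm_sq, e.orthonormal.1 j]; norm_num
          · intro k _ hk
            rw [e.orthonormal.2 (Ne.symm hk)]; ring
          · intro hj; exact absurd (Finset.mem_univ j) hj
  exact main.symm

theorem circle_trick (h : Euc n → ℝ) (hs : ContDiff ℝ (⊤:ℕ∞) h) (hrad : IsRadial h)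
    (v q : Euc n) (hv : ‖v‖ = 1) (hq : ‖q‖ = 1) (hvq : ⟪v, q⟫ = 0) {t : ℝ} (ht : t ≠ 0) :
    fderiv ℝ (fderiv ℝ h) (t • v) q q = fderiv ℝ h (t • v) v / t := by
  have hdiff : Differentiable ℝ h := hs.differentiable (by simp)
  have hdiff2 : Differentiable ℝ (fderiv ℝ h) :=
    (hs.fderiv_right (m := (⊤:ℕ∞)) (by norm_cast)).differentiable (by simp)
  set c : ℝ → Euc n := fun θ => (t * Real.cos θ) • v + (t * Real.sin θ) • q with hc_def
  set d : ℝ → Euc n := fun θ => (-(t * Real.sin θ)) • v + (t * Real.cos θ) • q with hd_def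
  have hc : ∀ θ, HasDerivAt c (d θ) θ := by
    intro θ
    have h1 : HasDerivAt (fun θ => t * Real.cos θ) (-(t * Real.sin θ)) θ := by
      simpa [mul_comm, mul_neg] using (Real.hasDerivAt_cos θ).const_mul t
    have h2 : HasDerivAt (fun θ => t * Real.sin θ) (t * Real.cos θ) θ :=
      (Real.hasDerivAt_sin θ).const_mul t
    exact (h1.smul_const v).add (h2.smul_const q)
  have hnorm : ∀ θ, ‖c θ‖ = ‖t • v‖ := by
    intro θ
    have e1 : ‖c θ‖ ^ 2 = ‖t • v‖ ^ 2 := by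
      rw [hc_def]
      simp only [@norm_add_sq_real]
      rw [real_inner_smul_left, real_inner_smul_right, hvq]
      rw [norm_smul, norm_smul, norm_smul, hv, hq]
      simp only [Real.norm_eq_abs, mul_one]
      have := Real.sin_sq_add_cos_sq θ
      rw [sq_abs, sq_abs, sq_abs]
      nlinarith [Real.sin_sq_add_cos_sq θ]
    have := congrArg Real.sqrt e1
    rwa [Real.sqrt_sq (norm_nonneg _), Real.sqrt_sq (norm_nonneg _)] at this
  have hG : ∀ θ, fderiv ℝ h (c θ) (d θ) = 0 := by
    intro θ
    have h1 : HasDerivAt (fun θ => h (c θ)) (fderiv ℝ h (c θ) (d θ)) θ :=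
      (hdiff.differentiableAt.hasFDerivAt).comp_hasDerivAt θ (hc θ)
    have h2 : (fun θ => h (c θ)) = fun _ => h (t • v) := funext fun θ => hrad _ _ (hnorm θ)
    rw [h2] at h1
    exact (hasDerivAt_const θ (h (t • v))).unique h1 |>.symm ▸ rfl
  have hc0 : c 0 = t • v := by simp [hc_def]
  have hd0 : d 0 = t • q := by simp [hd_def]
  have hd' : HasDerivAt d ((-t) • v) 0 := by
    have h1 : HasDerivAt (fun θ => -(t * Real.sin θ)) (-t) 0 := by
      exact ((Real.hasDerivAt_sin 0).const_mul t).neg.congr_deriv (by simp)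
    have h2 : HasDerivAt (fun θ => t * Real.cos θ) 0 0 := by
      simpa [mul_comm] using (Real.hasDerivAt_cos 0).const_mul t
    have h3 := (h1.smul_const v).add (h2.smul_const q)
    exact h3.congr_deriv (by simp)
  have hL : HasDerivAt (fun θ => fderiv ℝ h (c θ)) (fderiv ℝ (fderiv ℝ h) (t • v) (t • q)) 0 := by
    have h2 : HasFDerivAt (fderiv ℝ h) (fderiv ℝ (fderiv ℝ h) (t • v)) (c 0) := by
      rw [hc0]; exact hdiff2.differentiableAt.hasFDerivAt
    have := h2.comp_hasDerivAt 0 (hc 0)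
    rwa [hd0] at this
  have hGd : HasDerivAt (fun θ => fderiv ℝ h (c θ) (d θ))
      (fderiv ℝ (fderiv ℝ h) (t • v) (t • q) (d 0) + fderiv ℝ h (c 0) ((-t) • v)) 0 :=
    hL.clm_apply hd'
  have h2 : (fun θ => fderiv ℝ h (c θ) (d θ)) = fun _ => (0:ℝ) := funext hG
  have h3 := hGd
  rw [h2, hd0, hc0] at h3
  have h4 : (0:ℝ) = fderiv ℝ (fderiv ℝ h) (t • v) (t • q) (t • q)
      + fderiv ℝ h (t • v) ((-t) • v) := (hasDerivAt_const (0:ℝ) (0:ℝ)).unique h3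
  simp only [_root_.map_smul, ContinuousLinearMap.smul_apply, smul_eq_mul, map_neg, neg_smul,
    ContinuousLinearMap.map_neg] at h4
  have h5 : t * (t * (fderiv ℝ (fderiv ℝ h) (t • v) q q)) = t * (fderiv ℝ h (t • v) v) := by
    linarith
  have h6 := mul_left_cancel₀ ht h5
  rw [eq_div_iff ht]
  linear_combination h6

theorem radial_lap (hn : 1 ≤ n) (h : Euc n → ℝ) (hs : ContDiff ℝ (⊤:ℕ∞) h)
    (hrad : IsRadial h) (v : Euc n) (hv : ‖v‖ = 1) {t : ℝ} (ht : t ≠ 0) :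
    lap h (t • v) = deriv (deriv (fun s : ℝ => h (s • v))) t
      + ((n:ℝ) - 1) / t * deriv (fun s : ℝ => h (s • v)) t := by
  haveI : NeZero n := ⟨by omega⟩
  have hcard : Module.finrank ℝ (Euc n) = Fintype.card (Fin n) := by
    simp [finrank_euclideanSpace_fin]
  have hV : Orthonormal ℝ (Set.restrict ({0} : Set (Fin n)) (fun _ => v : Fin n → Euc n)) := by
    constructor
    · intro i; exact hv
    · intro i j hij
      exact absurd (Subtype.ext ((Set.mem_singleton_iff.1 i.2).trans
        (Set.mem_singleton_iff.1 j.2).symm)) hij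
  obtain ⟨b, hb⟩ := Orthonormal.exists_orthonormalBasis_extension_of_card_eq hcard hV
  have hb0 : b 0 = v := hb 0 rfl
  set p := t • v with hp
  set D2 := fderiv ℝ (fderiv ℝ h) p with hD2
  have hsum : lap h p = ∑ i : Fin n, D2 (b i) (b i) := lap_eq_sum_onb h hs p b
  have hoff : ∀ i : Fin n, i ≠ 0 → D2 (b i) (b i) = fderiv ℝ h p v / t := by
    intro i hi
    refine circle_trick h hs hrad v (b i) hv (b.orthonormal.1 i) ?_ ht
    rw [← hb0]
    exact b.orthonormal.2 (Ne.symm hi)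
  have hsplit : ∑ i : Fin n, D2 (b i) (b i)
      = D2 v v + (((n:ℝ) - 1)) * (fderiv ℝ h p v / t) := by
    rw [← Finset.add_sum_erase _ _ (Finset.mem_univ (0 : Fin n)), hb0]
    congr 1
    rw [Finset.sum_congr rfl fun i hi => hoff i (Finset.ne_of_mem_erase hi)]
    rw [Finset.sum_const, nsmul_eq_mul]
    congr 1
    rw [Finset.card_erase_of_mem (Finset.mem_univ _), Finset.card_univ, Fintype.card_fin]
    rw [Nat.cast_sub hn]
    norm_num
  have hder1 : deriv (fun s : ℝ => h (s • v)) = fun s => fderiv ℝ h (s • v) v :=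
    funext fun s => (line_deriv h hs v s).deriv
  have hder2 : deriv (deriv (fun s : ℝ => h (s • v))) t = D2 v v := by
    rw [hder1]
    exact (line_deriv2 h hs v v t).deriv
  rw [hsum, hsplit, hder2, hder1]
  ring

end Helpers


set_option maxHeartbeats 1000000 in
/-- steady solitons (β > 0) and expanders with γ > 0 have R > 0. -/
theorem steady_expander_scalar_curv_pos (n : ℕ) (hn : 3 ≤ n)
    (m ρ β γ : ℝ)
    (hm : m = ((n : ℝ) - 2) / ((n : ℝ) + 2))
    (hcase : (ρ = 0 ∧ 0 < β ∧ γ = 2 * β / (1 - m)) ∨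
             (ρ = -1 ∧ 1 / 2 < β ∧ γ = (2 * β - 1) / (1 - m)))
    (u : Euc n → ℝ)
    (hpos : ∀ x, 0 < u x) (hsmooth : ContDiff ℝ (⊤ : ℕ∞) u)
    (hrad : IsRadial u) (hpde : YamabePDE m β γ u) :
    ∀ x : Euc n, 0 < scalarCurv m u x := by
  have hn3 : (3:ℝ) ≤ (n:ℝ) := by exact_mod_cast hn
  have hm0 : 0 < m := by rw [hm]; apply div_pos <;> linarith
  have hm1 : m < 1 := by
    rw [hm, div_lt_one (by linarith)]; linarith
  have h1m : 0 < 1 - m := by linarith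
  have hβ : 0 < β := by
    rcases hcase with ⟨_, hb, _⟩ | ⟨_, hb, _⟩
    · exact hb
    · linarith
  have hγ : 0 < γ := by
    rcases hcase with ⟨_, hb, hg⟩ | ⟨_, hb, hg⟩
    · rw [hg]; positivity
    · rw [hg]; apply div_pos <;> linarith
  have hkey : m * γ < ((n:ℝ) - 2) * β := by
    have hmm : m * ((n:ℝ) + 2) = (n:ℝ) - 2 := by rw [hm]; field_simp
    have h4 : ((n:ℝ) + 2) * (1 - m) = 4 := by rw [hm]; field_simp; ring
    rcases hcase with ⟨_, hb, hg⟩ | ⟨_, hb, hg⟩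
    · have hγ1 : γ * (1 - m) = 2 * β := by rw [hg]; field_simp
      nlinarith [mul_pos hm0 hβ, mul_pos h1m hβ, mul_pos hm0 (mul_pos h1m hβ)]
    · have hγ1 : γ * (1 - m) = 2 * β - 1 := by rw [hg]; field_simp
      nlinarith [mul_pos hm0 (by linarith : (0:ℝ) < 2*β - 1), mul_pos hm0 h1m]
  -- the conformal factor to the power m
  have hune : ∀ x, u x ≠ 0 := fun x => (hpos x).ne'
  have hh_smooth : ContDiff ℝ (⊤:ℕ∞) (fun y => u y ^ m) := hsmooth.rpow_const_of_ne hune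
  have hh_rad : IsRadial (fun y => u y ^ m) := fun x y hxy => by show u x ^ m = u y ^ m; rw [hrad x y hxy]
  have hgrad : ∀ p y : Euc n, ⟪gradient u p, y⟫ = fderiv ℝ u p y := by
    intro p y
    have h1 := ((hsmooth.differentiable (by simp)) p).hasGradientAt.hasFDerivAt
    rw [h1.fderiv]
    exact (InnerProductSpace.toDual_apply_apply).symm
  -- key positivity
  have key : ∀ z : Euc n, 0 < β * ⟪z, gradient u z⟫ + γ * u z := by
    intro z
    rcases eq_or_ne z 0 with rfl | hz
    · rw [inner_zero_left]
      have := hpos 0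
      nlinarith
    · set T := ‖z‖ with hT_def
      have hT : 0 < T := norm_pos_iff.2 hz
      set v : Euc n := ‖z‖⁻¹ • z with hv_def
      have hv : ‖v‖ = 1 := by
        rw [hv_def, norm_smul, norm_inv, norm_norm]
        field_simp
      have hzv : z = T • v := by
        rw [hv_def, smul_smul, hT_def, mul_inv_cancel₀ (norm_ne_zero_iff.2 hz), one_smul]
      set f : ℝ → ℝ := fun s => u (s • v) with hf_def
      have hfc : ContDiff ℝ (⊤:ℕ∞) f := hsmooth.comp (contDiff_id.smul contDiff_const)
      have hfpos : ∀ s, 0 < f s := fun s => hpos _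
      have hfd : ∀ s, HasDerivAt f (fderiv ℝ u (s • v) v) s := fun s => line_deriv u hsmooth v s
      have hder : deriv f = fun s => fderiv ℝ u (s • v) v := funext fun s => (hfd s).deriv
      have hinner : ∀ s : ℝ, ⟪(s • v : Euc n), gradient u (s • v)⟫ = s * deriv f s := by
        intro s
        rw [real_inner_comm, hgrad (s • v) (s • v), hder]
        rw [ContinuousLinearMap.map_smul, smul_eq_mul]
      set ψ : ℝ → ℝ := fun s => β * (s * deriv f s) + γ * f s with hψ_def
      have hψc : Continuous ψ := by
        have hd : Continuous (deriv f) := by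
          rw [hder]
          exact Continuous.clm_apply
            (((hsmooth.fderiv_right (m := (⊤:ℕ∞)) (by norm_cast)).continuous).comp
              (continuous_id.smul continuous_const)) continuous_const
        exact ((continuous_const.mul (continuous_id.mul hd)).add
          (continuous_const.mul (hfc.continuous))).congr (fun s => rfl)
      -- reduce goal to ψ T
      have hgoal : β * ⟪z, gradient u z⟫ + γ * u z = ψ T := by
        rw [hzv, hinner T, hψ_def]
      rw [hgoal]
      by_contra hcon
      push_neg at hcon
      set S : Set ℝ := Set.Icc 0 T ∩ {s : ℝ | ψ s ≤ 0} with hS_def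
      have hSne : S.Nonempty := ⟨T, ⟨hT.le, le_refl T⟩, hcon⟩
      have hSclosed : IsClosed S := isClosed_Icc.inter (isClosed_le hψc continuous_const)
      have hSbdd : BddBelow S := ⟨0, fun s hs => hs.1.1⟩
      set t₀ := sInf S with ht₀_def
      have ht₀S : t₀ ∈ S := hSclosed.csInf_mem hSne hSbdd
      have hψ0 : 0 < ψ 0 := by
        have : ψ 0 = γ * f 0 := by rw [hψ_def]; simp
        rw [this]
        exact mul_pos hγ (hfpos 0)
      have ht₀pos : 0 < t₀ := by
        rcases lt_or_eq_of_le ht₀S.1.1 with h | h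
        · exact h
        · exfalso
          rw [← h] at ht₀S
          have h2 : ψ 0 ≤ 0 := ht₀S.2
          linarith
      have hlt : ∀ s, 0 ≤ s → s < t₀ → 0 < ψ s := by
        intro s h0 hst
        by_contra hle
        push_neg at hle
        have hsS : s ∈ S := ⟨⟨h0, le_trans hst.le ht₀S.1.2⟩, hle⟩
        exact absurd (csInf_le hSbdd hsS) (not_le.2 hst)
      have hψt₀ : ψ t₀ = 0 := by
        refine le_antisymm ht₀S.2 ?_
        have htend : Filter.Tendsto ψ (nhdsWithin t₀ (Set.Iio t₀)) (nhds (ψ t₀)) :=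
          (hψc.continuousAt).continuousWithinAt.tendsto
        refine ge_of_tendsto htend ?_
        filter_upwards [Ioo_mem_nhdsLT_of_mem (Set.mem_Ioc.2 ⟨ht₀pos, le_refl t₀⟩)] with s hs
        exact (hlt s hs.1.le hs.2).le
      -- second derivative
      set f'' : ℝ := fderiv ℝ (fderiv ℝ u) (t₀ • v) v v with hf''_def
      have hf''p : HasDerivAt (deriv f) f'' t₀ := by
        rw [hder]; exact line_deriv2 u hsmooth v v t₀
      have hψd : HasDerivAt ψ (β * (deriv f t₀ + t₀ * f'') + γ * deriv f t₀) t₀ := by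
        have h1 : HasDerivAt (fun s => s * deriv f s) (1 * deriv f t₀ + t₀ * f'') t₀ :=
          (hasDerivAt_id t₀).mul hf''p
        have h2 := (h1.const_mul β).add ((hfd t₀).const_mul γ)
        have h3 : β * (1 * deriv f t₀ + t₀ * f'') + γ * fderiv ℝ u (t₀ • v) v
            = β * (deriv f t₀ + t₀ * f'') + γ * deriv f t₀ := by
          rw [hder]; ring
        rw [h3] at h2
        exact h2
      -- PDE at t₀ • v gives lap = 0
      have hlap0 : lap (fun y => u y ^ m) (t₀ • v) = 0 := by
        have hp := hpde (t₀ • v)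
        rw [hinner t₀] at hp
        have hp2 : ((n:ℝ) - 1) / m * lap (fun y => u y ^ m) (t₀ • v) + ψ t₀ = 0 := by
          rw [hψ_def]; simp only []; linarith [hp]
        rw [hψt₀, add_zero] at hp2
        have hne : ((n:ℝ) - 1) / m ≠ 0 := div_ne_zero (by linarith) (by linarith)
        exact (mul_eq_zero.1 hp2).resolve_left hne
      -- radial laplacian
      have hrl := radial_lap (by omega) (fun y => u y ^ m) hh_smooth hh_rad v hv ht₀pos.ne'
      rw [hlap0] at hrl
      -- W = f ^ m
      have hWeq : (fun s : ℝ => (fun y => u y ^ m) (s • v)) = fun s => f s ^ m := rfl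
      rw [hWeq] at hrl
      have hW1 : ∀ s, HasDerivAt (fun s => f s ^ m)
          (deriv f s * m * f s ^ (m - 1)) s := by
        intro s
        have := (hfd s).rpow_const (p := m) (Or.inl (hfpos s).ne')
        rwa [hder]
      have hWder : deriv (fun s : ℝ => f s ^ m) = fun s => deriv f s * m * f s ^ (m - 1) :=
        funext fun s => (hW1 s).deriv
      have hW2 : HasDerivAt (fun s => deriv f s * m * f s ^ (m - 1))
          ((f'' * m) * f t₀ ^ (m - 1)
            + (deriv f t₀ * m) * (deriv f t₀ * (m - 1) * f t₀ ^ (m - 1 - 1))) t₀ := by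
        have hA : HasDerivAt (fun s => deriv f s * m) (f'' * m) t₀ := hf''p.mul_const m
        have hB : HasDerivAt (fun s => f s ^ (m - 1))
            (deriv f t₀ * (m - 1) * f t₀ ^ (m - 1 - 1)) t₀ := by
          have := (hfd t₀).rpow_const (p := m - 1) (Or.inl (hfpos t₀).ne')
          rwa [hder]
        have := hA.mul hB
        exact this
      have hW2' : deriv (deriv (fun s : ℝ => f s ^ m)) t₀
          = (f'' * m) * f t₀ ^ (m - 1)
            + (deriv f t₀ * m) * (deriv f t₀ * (m - 1) * f t₀ ^ (m - 1 - 1)) := by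
        rw [hWder]
        exact hW2.deriv
      have hd1 : deriv (fun s : ℝ => f s ^ m) t₀ = deriv f t₀ * m * f t₀ ^ (m - 1) :=
        (hW1 t₀).deriv
      rw [hW2', hd1] at hrl
      -- now pure algebra
      set F : ℝ := f t₀ with hF_def
      set F' : ℝ := deriv f t₀ with hF'_def
      have hFpos : 0 < F := hfpos t₀
      have hF0 : F ≠ 0 := hFpos.ne'
      have ht0' : t₀ ≠ 0 := ht₀pos.ne'
      have hP : (0:ℝ) < F ^ (m - 1) := Real.rpow_pos_of_pos hFpos _
      have hPne : F ^ (m - 1) ≠ 0 := hP.ne'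
      have hmne : m ≠ 0 := hm0.ne'
      have hPP : F ^ (m - 1 - 1) = F ^ (m - 1) / F := by
        rw [show m - 1 - 1 = (m - 1) + (-1) by ring, Real.rpow_add hFpos, Real.rpow_neg_one]
        ring
      have hψt₀' : β * (t₀ * F') + γ * F = 0 := hψt₀
      rw [hPP] at hrl
      have hrel2 : f'' * F * t₀ + F' ^ 2 * (m - 1) * t₀ + ((n:ℝ) - 1) * F' * F = 0 := by
        have h0 : (m * F ^ (m - 1))
            * (f'' * F * t₀ + F' ^ 2 * (m - 1) * t₀ + ((n:ℝ) - 1) * F' * F) = 0 := by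
          field_simp at hrl
          linear_combination -hrl
        have hmp : m * F ^ (m - 1) ≠ 0 := mul_ne_zero hmne hPne
        exact (mul_eq_zero.1 h0).resolve_left hmp
      have hDpos : 0 < β * (F' + t₀ * f'') + γ * F' := by
        have hDmul : (β * (F' + t₀ * f'') + γ * F') * (β * t₀ * F)
            = F ^ 2 * γ * (((n:ℝ) - 2) * β - m * γ) := by
          linear_combination (β^2 * t₀) * hrel2
            + (β * t₀ * (1 - m) * F' + (m * γ - ((n:ℝ) - 2) * β) * F) * hψt₀'
        have hpos1 : 0 < F ^ 2 * γ * (((n:ℝ) - 2) * β - m * γ) := by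
          have : (0:ℝ) < F ^ 2 := by positivity
          have h2 : (0:ℝ) < ((n:ℝ) - 2) * β - m * γ := by linarith
          positivity
        nlinarith [mul_pos (mul_pos hβ ht₀pos) hFpos]
      -- contradiction via slope at first zero
      have hslope := (hψd.hasDerivWithinAt (s := Set.Iio t₀))
      rw [hasDerivWithinAt_iff_tendsto_slope' (by simp : t₀ ∉ Set.Iio t₀)] at hslope
      have hev1 : ∀ᶠ s in nhdsWithin t₀ (Set.Iio t₀), 0 < slope ψ t₀ s :=
        hslope.eventually (eventually_gt_nhds hDpos)
      have hev2 : ∀ᶠ s in nhdsWithin t₀ (Set.Iio t₀), s ∈ Set.Ioo 0 t₀ :=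
        Ioo_mem_nhdsLT_of_mem (Set.mem_Ioc.2 ⟨ht₀pos, le_refl t₀⟩)
      obtain ⟨s, hs1, hs2⟩ := (hev1.and hev2).exists
      rw [slope_def_field, hψt₀] at hs1
      have : (ψ s - 0) / (s - t₀) < 0 :=
        div_neg_of_pos_of_neg (by simpa using hlt s hs2.1.le hs2.2) (by linarith [hs2.2])
      linarith
  -- assemble scalar curvature positivity
  intro x
  have hup := hpos x
  have hp := hpde x
  set L := lap (fun y => u y ^ m) x with hL_def
  set I : ℝ := ⟪x, gradient u x⟫ with hI_def
  have hS : 0 < β * I + γ * u x := key x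
  have h1 : ((n:ℝ) - 1) ≠ 0 := by linarith
  have h2 : ((n:ℝ) - 2) ≠ 0 := by linarith
  have hmne0 : m ≠ 0 := hm0.ne'
  have hLval : L = -(β * I + γ * u x) * m / ((n:ℝ) - 1) := by
    rw [eq_div_iff h1]
    field_simp at hp
    linarith
  show 0 < -(4 * ((n : ℝ) - 1) / ((n : ℝ) - 2)) * L / u x
  rw [hLval]
  have hrewrite : -(4 * ((n:ℝ) - 1) / ((n:ℝ) - 2))
        * (-(β * I + γ * u x) * m / ((n:ℝ) - 1)) / u x
      = 4 * m / (((n:ℝ) - 2)) * (β * I + γ * u x) / u x := by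
    field_simp
  rw [hrewrite]
  apply div_pos _ hup
  apply mul_pos _ hS
  apply div_pos (by linarith) (by linarith)
end
end

section
/- Let n ≥ 3 be an integer, m = (n−2)/(n+2), 0 < β < 1/2, and γ = (2β−1)/(1−m) (so γ < 0; this is the expander case ρ = −1). If u is a positive smooth radially symmetric solution of ((n−1)/m)·Δ(u^m) + β·(x·∇u) + γ·u = 0 on ℝⁿ, then the scalar curvature R = −(4(n−1)/(n−2))·u^{−1}·Δ(u^m) satisfies R(x) < 0 for every x ∈ ℝⁿ. -/
open Real MeasureTheory Metric
open scoped Topology RealInnerProductSpace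

set_option maxHeartbeats 1000000
noncomputable section

lemma line_hasDerivAt {n : ℕ} {f : Euc n → ℝ} (hf : Differentiable ℝ f) (x v : Euc n) (t : ℝ) :
    HasDerivAt (fun s : ℝ => f (x + s • v)) (fderiv ℝ f (x + t • v) v) t := by
  have hL : HasDerivAt (fun s : ℝ => x + s • v) v t := by
    simpa using ((hasDerivAt_id t).smul_const v).const_add x
  exact (hf (x + t • v)).hasFDerivAt.comp_hasDerivAt t hL

lemma second_deriv_line {n : ℕ} {f : Euc n → ℝ} (hf : ContDiff ℝ (⊤ : ℕ∞) f) (x v : Euc n) :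
    fderiv ℝ (fun y => fderiv ℝ f y v) x v
      = deriv (deriv (fun s : ℝ => f (x + s • v))) 0 := by
  have hdf : Differentiable ℝ f := hf.differentiable (by simp)
  have hG : Differentiable ℝ (fun y => fderiv ℝ f y v) :=
    ((hf.fderiv_right (m := (⊤:ℕ∞)) (by simp)).clm_apply contDiff_const).differentiable
      (by simp)
  have h1 : deriv (fun s : ℝ => f (x + s • v)) = fun t => fderiv ℝ f (x + t • v) v :=
    funext fun t => (line_hasDerivAt hdf x v t).deriv
  rw [h1]
  have h2 := (line_hasDerivAt hG x v 0).deriv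
  simpa using h2.symm

/-- expanders with 0 < β < 1/2 (so γ < 0) have R < 0. -/
theorem expander_scalar_curv_neg (n : ℕ) (hn : 3 ≤ n)
    (m β γ : ℝ)
    (hm : m = ((n : ℝ) - 2) / ((n : ℝ) + 2))
    (hβ : 0 < β) (hβ' : β < 1 / 2)
    (hγ : γ = (2 * β - 1) / (1 - m))
    (u : Euc n → ℝ)
    (hpos : ∀ x, 0 < u x) (hsmooth : ContDiff ℝ (⊤ : ℕ∞) u)
    (hrad : IsRadial u) (hpde : YamabePDE m β γ u) :
    ∀ x : Euc n, scalarCurv m u x < 0 := by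
  -- numeric facts
  have hn3 : (3:ℝ) ≤ (n:ℝ) := by exact_mod_cast hn
  have hn2 : (0:ℝ) < (n:ℝ) + 2 := by linarith
  have hm0 : 0 < m := by rw [hm]; apply div_pos <;> linarith
  have hm1 : m < 1 := by rw [hm, div_lt_one hn2]; linarith
  have hγ0 : γ < 0 := by rw [hγ]; apply div_neg_of_neg_of_pos <;> linarith
  have hA : 0 < ((n:ℝ) - 1) / m := by apply div_pos <;> linarith
  have hud : Differentiable ℝ u := hsmooth.differentiable (by simp)
  have hw_smooth : ContDiff ℝ (⊤:ℕ∞) (fun y => u y ^ m) := by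
    rw [contDiff_iff_contDiffAt]
    intro y
    exact hsmooth.contDiffAt.rpow_const_of_ne (hpos y).ne'
  have hn0 : 0 < n := by omega
  set i0 : Fin n := ⟨0, hn0⟩ with hi0
  clear_value i0
  set E : Euc n := EuclideanSpace.single i0 1 with hE
  have hEnorm : ‖E‖ = 1 := by rw [hE]; simp [EuclideanSpace.norm_single]
  clear_value E
  set φ : ℝ → ℝ := fun r => u (r • E) with hφdef
  have hφu : ∀ x : Euc n, u x = φ ‖x‖ := by
    intro x
    apply hrad
    rw [norm_smul, hEnorm, mul_one, Real.norm_eq_abs, abs_of_nonneg (norm_nonneg x)]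
  have hφ : ContDiff ℝ (⊤:ℕ∞) φ := by
    rw [hφdef]
    exact hsmooth.comp (contDiff_id.smul contDiff_const)
  have hφpos : ∀ r, 0 < φ r := fun r => hφdef ▸ hpos _
  clear_value φ
  have hφd : Differentiable ℝ φ := hφ.differentiable (by simp)
  have hφd2 : Differentiable ℝ (deriv φ) :=
    ((contDiff_infty_iff_deriv.mp hφ).2).differentiable (by simp)
  -- inner product with the gradient of a radial function
  have hinner : ∀ x : Euc n, ⟪x, gradient u x⟫ = ‖x‖ * deriv φ ‖x‖ := by
    intro x
    have h1 : ⟪x, gradient u x⟫ = fderiv ℝ u x x := by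
      rw [real_inner_comm]
      simp only [gradient]
      exact InnerProductSpace.toDual_symm_apply
    have h2 : HasDerivAt (fun s : ℝ => u (x + s • x)) (fderiv ℝ u x x) 0 := by
      simpa using line_hasDerivAt hud x x 0
    have h4 : HasDerivAt (fun s : ℝ => φ ((1 + s) * ‖x‖)) (deriv φ ‖x‖ * ‖x‖) 0 := by
      have ha : HasDerivAt (fun s : ℝ => (1 + s) * ‖x‖) ‖x‖ 0 := by
        simpa using ((hasDerivAt_id (0:ℝ)).const_add 1).mul_const ‖x‖
      have hb : HasDerivAt φ (deriv φ ((1 + (0:ℝ)) * ‖x‖)) ((1 + (0:ℝ)) * ‖x‖) :=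
        (hφd _).hasDerivAt
      exact (hb.comp 0 ha).congr_deriv (by simp)
    have h3 : (fun s : ℝ => u (x + s • x)) =ᶠ[𝓝 (0:ℝ)] fun s => φ ((1 + s) * ‖x‖) := by
      filter_upwards [Ioi_mem_nhds (by norm_num : (-1:ℝ) < 0)] with s hs
      rw [hφu (x + s • x)]
      congr 1
      have hx' : x + s • x = (1 + s) • x := by rw [add_smul, one_smul]
      rw [hx', norm_smul, Real.norm_eq_abs,
        abs_of_pos (by linarith [Set.mem_Ioi.mp hs] : (0:ℝ) < 1 + s)]
    have h5 : HasDerivAt (fun s : ℝ => u (x + s • x)) (deriv φ ‖x‖ * ‖x‖) 0 :=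
      h4.congr_of_eventuallyEq h3
    rw [h1, h2.unique h5, mul_comm]
  -- the radial PDE
  set g : ℝ → ℝ := fun r => β * (r * deriv φ r) + γ * φ r with hgdef
  clear_value g
  have hPDE' : ∀ x : Euc n, ((n:ℝ) - 1) / m * lap (fun y => u y ^ m) x + g ‖x‖ = 0 := by
    intro x
    have h := hpde x
    rw [hinner x] at h
    rw [hφu x] at h
    simp only [hgdef]
    linarith
  have hgder : ∀ r : ℝ, HasDerivAt g
      (β * (deriv φ r + r * deriv (deriv φ) r) + γ * deriv φ r) r := by
    intro r
    have h1 : HasDerivAt (fun t : ℝ => t * deriv φ t)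
        (1 * deriv φ r + r * deriv (deriv φ) r) r :=
      (hasDerivAt_id r).mul (hφd2 r).hasDerivAt
    have h2 : HasDerivAt φ (deriv φ r) r := (hφd r).hasDerivAt
    have h3 := (h1.const_mul β).add (h2.const_mul γ)
    rw [hgdef]
    exact h3.congr_deriv (by ring)
  have hgc : Continuous g := by
    have : Differentiable ℝ g := fun r => (hgder r).differentiableAt
    exact this.continuous
  -- main argument
  intro xs
  by_contra hcon
  push_neg at hcon
  have hc4 : 0 < 4 * ((n:ℝ) - 1) / ((n:ℝ) - 2) := by apply div_pos <;> linarith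
  have hlap_le : lap (fun y => u y ^ m) xs ≤ 0 := by
    unfold scalarCurv at hcon
    rw [le_div_iff₀ (hpos xs)] at hcon
    by_contra hL
    push_neg at hL
    nlinarith
  have hgxs : 0 ≤ g ‖xs‖ := by
    have h := hPDE' xs
    nlinarith [mul_nonneg hA.le (neg_nonneg.mpr hlap_le)]
  have hg0 : g 0 < 0 := by
    have h0 : g 0 = γ * φ 0 := by rw [hgdef]; simp
    rw [h0]
    exact mul_neg_of_neg_of_pos hγ0 (hφpos 0)
  have hxs0 : 0 < ‖xs‖ := by
    rcases (norm_nonneg xs).lt_or_eq with h | h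
    · exact h
    · exfalso; rw [← h] at hgxs; linarith
  -- the first zero of g
  have hSne : (Set.Icc (0:ℝ) ‖xs‖ ∩ {r | 0 ≤ g r}).Nonempty :=
    ⟨‖xs‖, ⟨⟨norm_nonneg xs, le_refl _⟩, hgxs⟩⟩
  have hSbdd : BddBelow (Set.Icc (0:ℝ) ‖xs‖ ∩ {r | 0 ≤ g r}) :=
    ⟨0, fun r hr => hr.1.1⟩
  have hSclosed : IsClosed (Set.Icc (0:ℝ) ‖xs‖ ∩ {r | 0 ≤ g r}) :=
    isClosed_Icc.inter (isClosed_le continuous_const hgc)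
  set r₀ : ℝ := sInf (Set.Icc (0:ℝ) ‖xs‖ ∩ {r | 0 ≤ g r}) with hr0def
  have hr₀S : r₀ ∈ Set.Icc (0:ℝ) ‖xs‖ ∩ {r | 0 ≤ g r} := by
    rw [hr0def]; exact hSclosed.csInf_mem hSne hSbdd
  clear_value r₀
  have hr₀g : 0 ≤ g r₀ := hr₀S.2
  have hr₀0 : 0 ≤ r₀ := hr₀S.1.1
  have hr₀pos : 0 < r₀ := by
    rcases hr₀0.lt_or_eq with h | h
    · exact h
    · exfalso; rw [← h] at hr₀g; linarith
  have hbelow : ∀ r, 0 ≤ r → r < r₀ → g r < 0 := by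
    intro r h0 hr
    by_contra hge
    push_neg at hge
    have hrS : r ∈ Set.Icc (0:ℝ) ‖xs‖ ∩ {r | 0 ≤ g r} :=
      ⟨⟨h0, le_trans hr.le hr₀S.1.2⟩, hge⟩
    have := csInf_le hSbdd hrS
    rw [← hr0def] at this
    exact absurd this (not_le.mpr hr)
  have hgr₀ : g r₀ = 0 := by
    refine le_antisymm ?_ hr₀g
    have ht : Filter.Tendsto g (𝓝[<] r₀) (𝓝 (g r₀)) :=
      (hgc.tendsto r₀).mono_left nhdsWithin_le_nhds
    refine le_of_tendsto ht ?_
    filter_upwards [Ioo_mem_nhdsLT hr₀pos] with r hr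
    exact (hbelow r hr.1.le hr.2).le
  set p : ℝ := φ r₀ with hp
  set q : ℝ := deriv φ r₀ with hq
  set z : ℝ := deriv (deriv φ) r₀ with hz
  have hppos : 0 < p := hp ▸ hφpos r₀
  clear_value p q z
  -- left derivative of g at r₀ is nonnegative
  have hG' : 0 ≤ β * (q + r₀ * z) + γ * q := by
    have ht := hasDerivAt_iff_tendsto_slope.mp (hgder r₀)
    rw [← hq, ← hz] at ht
    have ht' : Filter.Tendsto (slope g r₀) (𝓝[<] r₀) (𝓝 (β * (q + r₀ * z) + γ * q)) :=
      ht.mono_left (nhdsWithin_mono _ fun x hx => ne_of_lt hx)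
    refine ge_of_tendsto ht' ?_
    filter_upwards [Ioo_mem_nhdsLT hr₀pos] with r hr
    have h1 : g r < 0 := hbelow r hr.1.le hr.2
    have h2 : r - r₀ < 0 := by linarith [hr.2]
    rw [slope_def_field, hgr₀, sub_zero]
    exact div_nonneg_iff.mpr (Or.inr ⟨h1.le, h2.le⟩)
  -- derivative machinery for W = φ ^ m
  set DW : ℝ → ℝ := fun r => deriv φ r * m * φ r ^ (m - 1) with hDW
  clear_value DW
  have hWd : ∀ r, HasDerivAt (fun t => φ t ^ m) (DW r) r := by
    intro r
    rw [hDW]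
    exact ((hφd r).hasDerivAt).rpow_const (Or.inl (hφpos r).ne')
  have hDWr₀ : DW r₀ = q * m * p ^ (m - 1) := by
    rw [hDW, hq, hp]
  set W2 : ℝ := z * m * p ^ (m - 1) + q * m * (q * (m - 1) * p ^ (m - 2)) with hW2
  clear_value W2
  have hDWd : HasDerivAt DW W2 r₀ := by
    have h1 : HasDerivAt (fun r => deriv φ r * m) (deriv (deriv φ) r₀ * m) r₀ :=
      (hφd2 r₀).hasDerivAt.mul_const m
    have h2 : HasDerivAt (fun r => φ r ^ (m - 1))
        (deriv φ r₀ * (m - 1) * φ r₀ ^ (m - 1 - 1)) r₀ :=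
      (hφd r₀).hasDerivAt.rpow_const (Or.inl (hφpos r₀).ne')
    have h3 := h1.mul h2
    rw [hDW, hW2, hq, hz, hp]
    exact h3.congr_deriv (by rw [show m - 1 - 1 = m - 2 by ring])
  -- the on-axis point
  set x₀ : Euc n := r₀ • E with hx₀
  have hx₀norm : ‖x₀‖ = r₀ := by
    rw [hx₀, norm_smul, hEnorm, mul_one, Real.norm_eq_abs, abs_of_pos hr₀pos]
  clear_value x₀
  -- second derivative in the axis direction
  have hterm0 : fderiv ℝ (fun y => fderiv ℝ (fun y => u y ^ m) y (EuclideanSpace.single i0 1))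
      x₀ (EuclideanSpace.single i0 1) = W2 := by
    rw [show EuclideanSpace.single i0 (1:ℝ) = E from hE.symm]
    rw [second_deriv_line hw_smooth x₀ E]
    have heq : (fun s : ℝ => (fun y => u y ^ m) (x₀ + s • E)) = fun s => φ (r₀ + s) ^ m := by
      funext s
      show u (x₀ + s • E) ^ m = φ (r₀ + s) ^ m
      rw [hx₀, ← add_smul, hφdef]
    rw [heq]
    have hd1 : ∀ s : ℝ, HasDerivAt (fun t : ℝ => φ (r₀ + t) ^ m) (DW (r₀ + s)) s := by
      intro s
      have hadd : HasDerivAt (fun t : ℝ => r₀ + t) 1 s := (hasDerivAt_id s).const_add r₀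
      have h := (hWd (r₀ + s)).comp s hadd
      exact h.congr_deriv (mul_one _)
    have hder1 : deriv (fun t : ℝ => φ (r₀ + t) ^ m) = fun s => DW (r₀ + s) :=
      funext fun s => (hd1 s).deriv
    rw [hder1]
    have hadd0 : HasDerivAt (fun t : ℝ => r₀ + t) 1 0 := (hasDerivAt_id 0).const_add r₀
    have hDWd' : HasDerivAt DW W2 ((fun t : ℝ => r₀ + t) 0) := by simpa using hDWd
    have h := hDWd'.comp 0 hadd0
    exact (h.congr_deriv (mul_one _)).deriv
  -- second derivative in the orthogonal directions
  have hterm_ne : ∀ i : Fin n, i ≠ i0 →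
      fderiv ℝ (fun y => fderiv ℝ (fun y => u y ^ m) y (EuclideanSpace.single i 1))
        x₀ (EuclideanSpace.single i 1) = DW r₀ / r₀ := by
    intro i hi
    rw [second_deriv_line hw_smooth x₀ (EuclideanSpace.single i 1)]
    set v : Euc n := EuclideanSpace.single i 1 with hv
    set sf : ℝ → ℝ := fun s => Real.sqrt (r₀ ^ 2 + s ^ 2) with hsf
    clear_value sf
    have hsfs : ∀ s : ℝ, sf s = Real.sqrt (r₀ ^ 2 + s ^ 2) := fun s => by rw [hsf]
    have hsfpos : ∀ s : ℝ, (0:ℝ) < r₀ ^ 2 + s ^ 2 := fun s => by positivity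
    have hsf0 : sf 0 = r₀ := by
      rw [hsfs 0, show r₀ ^ 2 + (0:ℝ) ^ 2 = r₀ ^ 2 by ring, Real.sqrt_sq hr₀pos.le]
    have hnorm : ∀ s : ℝ, ‖x₀ + s • v‖ = sf s := by
      intro s
      have hinn : ⟪x₀, s • v⟫ = 0 := by
        rw [hx₀, hv, real_inner_smul_left, real_inner_smul_right]
        have h0 : ⟪(EuclideanSpace.single i0 (1:ℝ)), EuclideanSpace.single i (1:ℝ)⟫ = 0 := by
          rw [EuclideanSpace.inner_single_left]
          simp [EuclideanSpace.single_apply, Ne.symm hi]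
        rw [show E = EuclideanSpace.single i0 (1:ℝ) from hE]
        rw [h0]; ring
      have h2 : ‖x₀ + s • v‖ ^ 2 = r₀ ^ 2 + s ^ 2 := by
        rw [norm_add_sq_real, hinn, hx₀norm, norm_smul, hv, EuclideanSpace.norm_single,
          norm_one, mul_one, Real.norm_eq_abs, sq_abs]
        ring
      rw [hsfs s, ← h2, Real.sqrt_sq (norm_nonneg _)]
    have heq : (fun s : ℝ => (fun y => u y ^ m) (x₀ + s • v)) = fun s => φ (sf s) ^ m := by
      funext s
      show u (x₀ + s • v) ^ m = φ (sf s) ^ m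
      rw [hφu (x₀ + s • v), hnorm s]
    rw [heq]
    have hsd : ∀ s : ℝ, HasDerivAt sf (s / sf s) s := by
      intro s
      have hin : HasDerivAt (fun t : ℝ => r₀ ^ 2 + t ^ 2) (2 * s) s := by
        simpa using ((hasDerivAt_pow 2 s).const_add (r₀ ^ 2))
      have hsq := (Real.hasDerivAt_sqrt (hsfpos s).ne').comp s hin
      have key : HasDerivAt (fun t : ℝ => Real.sqrt (r₀ ^ 2 + t ^ 2))
          (s / Real.sqrt (r₀ ^ 2 + s ^ 2)) s := by
        refine hsq.congr_deriv ?_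
        have hne : Real.sqrt (r₀ ^ 2 + s ^ 2) ≠ 0 := (Real.sqrt_pos.mpr (hsfpos s)).ne'
        ring
      have hfun : sf = fun t : ℝ => Real.sqrt (r₀ ^ 2 + t ^ 2) := funext fun t => hsfs t
      rw [hfun]
      exact key
    have hW1 : ∀ s : ℝ, HasDerivAt (fun t => φ (sf t) ^ m) (DW (sf s) * (s / sf s)) s :=
      fun s => (hWd (sf s)).comp s (hsd s)
    have hder1 : deriv (fun t => φ (sf t) ^ m) = fun s => DW (sf s) * (s / sf s) :=
      funext fun s => (hW1 s).deriv
    rw [hder1]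
    have hF1 : HasDerivAt (fun s => DW (sf s)) (W2 * ((0:ℝ) / sf 0)) 0 := by
      have hDWd' : HasDerivAt DW W2 (sf 0) := by rw [hsf0]; exact hDWd
      exact hDWd'.comp 0 (hsd 0)
    have hF2 : HasDerivAt (fun s : ℝ => s / sf s)
        ((1 * sf 0 - (0:ℝ) * ((0:ℝ) / sf 0)) / sf 0 ^ 2) 0 := by
      have := (hasDerivAt_id (0:ℝ)).div (hsd 0) (by rw [hsf0]; exact hr₀pos.ne')
      exact this
    have hprod := hF1.mul hF2
    rw [HasDerivAt.deriv (f := fun s => DW (sf s) * (s / sf s)) hprod, hsf0]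
    field_simp
    ring
  -- the Laplacian at the on-axis point
  have hlapx₀ : lap (fun y => u y ^ m) x₀ = W2 + ((n:ℝ) - 1) * (DW r₀ / r₀) := by
    unfold lap
    rw [← Finset.add_sum_erase _ _ (Finset.mem_univ i0), hterm0]
    have hsum : ∑ i ∈ Finset.univ.erase i0,
        fderiv ℝ (fun y => fderiv ℝ (fun y => u y ^ m) y (EuclideanSpace.single i 1))
          x₀ (EuclideanSpace.single i 1) = ((n - 1 : ℕ) : ℝ) * (DW r₀ / r₀) := by
      rw [Finset.sum_congr rfl (fun i hi => hterm_ne i (Finset.ne_of_mem_erase hi))]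
      rw [Finset.sum_const, Finset.card_erase_of_mem (Finset.mem_univ i0),
        Finset.card_univ, Fintype.card_fin, nsmul_eq_mul]
    rw [hsum]
    have hcast : ((n - 1 : ℕ) : ℝ) = (n:ℝ) - 1 := by
      have h1 : 1 ≤ n := by omega
      push_cast [Nat.cast_sub h1]
      ring
    rw [hcast]
  -- the PDE at the on-axis point
  have hPDEx₀ := hPDE' x₀
  rw [hx₀norm, hgr₀, hlapx₀, add_zero] at hPDEx₀
  have hlap0 : W2 + ((n:ℝ) - 1) * (DW r₀ / r₀) = 0 := by
    rcases mul_eq_zero.mp hPDEx₀ with h | h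
    · exact absurd h hA.ne'
    · exact h
  -- algebraic endgame
  have hP1 : (0:ℝ) < p ^ (m - 1) := Real.rpow_pos_of_pos hppos _
  have hP2 : (0:ℝ) < p ^ (m - 2) := Real.rpow_pos_of_pos hppos _
  have hP12 : p ^ (m - 1) = p ^ (m - 2) * p := by
    rw [show m - 1 = (m - 2) + 1 by ring, Real.rpow_add hppos, Real.rpow_one]
  have hLt : (DW r₀ / r₀) * r₀ = q * m * p ^ (m - 1) := by
    rw [div_mul_cancel₀ _ hr₀pos.ne', hDWr₀]
  have heq1 : β * (r₀ * q) + γ * p = 0 := by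
    have h := hgr₀
    simp only [hgdef] at h
    rw [hq, hp]
    exact h
  have hq0 : 0 < q := by
    by_contra h
    push_neg at h
    nlinarith [mul_pos hβ hr₀pos, mul_pos (neg_pos.mpr hγ0) hppos,
      mul_nonneg (mul_pos hβ hr₀pos).le (neg_nonneg.mpr h)]
  have hmγ : m * γ = (((n:ℝ) - 2) * (2 * β - 1)) / 4 := by
    rw [hγ, hm]
    have h1 : 1 - ((n:ℝ) - 2) / ((n:ℝ) + 2) = 4 / ((n:ℝ) + 2) := by
      field_simp
      norm_num
    rw [h1]
    field_simp
  have hkey : m * γ - β * ((n:ℝ) - 2) < 0 := by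
    nlinarith [mul_pos (by linarith : (0:ℝ) < (n:ℝ) - 2) (by linarith : (0:ℝ) < 2 * β + 1)]
  -- the contradiction
  have hA0 : z * m * p ^ (m - 1) + q * m * (q * (m - 1) * p ^ (m - 2))
      + ((n:ℝ) - 1) * (DW r₀ / r₀) = 0 := by
    rw [← hW2]; exact hlap0
  have hident : (β * (q + r₀ * z) + γ * q) * (m * p ^ (m - 1) * r₀)
      = q * m * p ^ (m - 1) * r₀ * (m * γ - β * ((n:ℝ) - 2)) := by
    linear_combination (β * r₀ ^ 2) * hA0 - (β * ((n:ℝ) - 1) * r₀) * hLt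
      - (m * (m - 1) * q * r₀ * (p ^ (m - 2))) * heq1
      + (q * m * γ * (1 - m) * r₀) * hP12
  have h1 : 0 ≤ (β * (q + r₀ * z) + γ * q) * (m * p ^ (m - 1) * r₀) :=
    mul_nonneg hG' (mul_pos (mul_pos hm0 hP1) hr₀pos).le
  have h2 : q * m * p ^ (m - 1) * r₀ * (m * γ - β * ((n:ℝ) - 2)) < 0 :=
    mul_neg_of_pos_of_neg (mul_pos (mul_pos (mul_pos hq0 hm0) hP1) hr₀pos) hkey
  rw [hident] at h1
  linarith
end
end

section
/- Let n ≥ 3 be an integer, m = (n−2)/(n+2), β > 0, and γ = (2β−1)/(1−m) (expander case ρ = −1). If u is a positive smooth radially symmetric solution of ((n−1)/m)·Δ(u^m) + β·(x·∇u) + γ·u = 0 on ℝⁿ, then for every x ∈ ℝⁿ one has the lower bound u(x) ≥ (u(0)^{m−1} + (β(1−m)/(2(n−1)))·|x|²)^{−1/(1−m)}. -/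
open Real MeasureTheory Metric
open scoped Topology RealInnerProductSpace

noncomputable section

lemma second_dir {n : ℕ} {g : Euc n → ℝ} (hg : ContDiff ℝ (⊤ : ℕ∞) g) (x v : Euc n) :
    fderiv ℝ (fun y => fderiv ℝ g y v) x v
      = deriv (deriv (fun t : ℝ => g (x + t • v))) 0 := by
  have hgd : Differentiable ℝ g := hg.differentiable (by simp)
  have hcurve : ∀ t : ℝ, HasDerivAt (fun s : ℝ => x + s • v) v t := fun t => by
    simpa using ((hasDerivAt_id t).smul_const v).const_add x
  have hd1 : ∀ t : ℝ, HasDerivAt (fun s : ℝ => g (x + s • v)) (fderiv ℝ g (x + t • v) v) t := by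
    intro t
    exact ((hgd (x + t • v)).hasFDerivAt).comp_hasDerivAt t (hcurve t)
  have h1 : deriv (fun t : ℝ => g (x + t • v)) = fun t => fderiv ℝ g (x + t • v) v :=
    funext fun t => (hd1 t).deriv
  rw [h1]
  have hF : Differentiable ℝ (fun y => fderiv ℝ g y v) := by
    have hfd : Differentiable ℝ (fderiv ℝ g) :=
      (hg.fderiv_right (m := (⊤ : ℕ∞)) (by exact_mod_cast le_top)).differentiable
        (by simp)
    exact fun y => ((ContinuousLinearMap.apply ℝ ℝ v).differentiable.comp hfd) y
  have h2 : HasDerivAt (fun t : ℝ => fderiv ℝ g (x + t • v) v)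
      (fderiv ℝ (fun y => fderiv ℝ g y v) x v) 0 := by
    have h3 := ((hF (x + (0:ℝ) • v)).hasFDerivAt).comp_hasDerivAt (0:ℝ) (hcurve 0)
    simpa [Function.comp_def] using h3
  exact h2.deriv.symm


set_option maxHeartbeats 1000000 in
lemma key_ineq (nr β m γ c S a b dd r P : ℝ)
    (hnr : 3 ≤ nr) (hβ : 0 < β) (hr : 0 < r) (ha0 : 0 < a) (hS0 : 0 < S) (hP : 0 < P)
    (hm : m = (nr-2)/(nr+2)) (hγ : γ = (2*β-1)/(1-m)) (hc : c = β*(1-m)/(2*(nr-1)))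
    (h2 : (nr-1) * (r * (m*((m-1)*(S*a)*b*b + S*a*a*dd)) + (nr-1)*(m*(S*a*a)*b))
          + m*(β*(r^2*b) + γ*(r*a)) = 0) :
    ((nr-1) * P * ((m-1)*(S*a)*b - 2*c*r) + (P*r) * ((m-1)*((m-2)*S*b*b + (S*a)*dd) - 2*c)) * a
      + (P*r) * ((m-1)*(S*a)*b - 2*c*r) * b ≤ 0 := by
  have hn1 : 0 < nr - 1 := by linarith
  have hn2 : 0 < nr - 2 := by linarith
  have hn2p : 0 < nr + 2 := by linarith
  have hm0 : 0 < m := by rw [hm]; positivity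
  have hm1 : m < 1 := by rw [hm, div_lt_one hn2p]; linarith
  have h1m : 0 < 1 - m := by linarith
  have hcd : (nr-1) * r * m * S * a * a ≠ 0 := by
    have : 0 < (nr-1) * r * m * S * a * a :=
      mul_pos (mul_pos (mul_pos (mul_pos (mul_pos hn1 hr) hm0) hS0) ha0) ha0
    exact this.ne'
  have h3 : (nr-1) * r * m * S * a * a * dd
      = -((nr-1) * (r*m*(m-1)*S*a*b^2 + (nr-1)*m*S*a*a*b)
          + m*(β*r^2*b + γ*(r*a))) := by
    linear_combination h2
  have hd : dd = (-((nr-1) * (r*m*(m-1)*S*a*b^2 + (nr-1)*m*S*a*a*b)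
          + m*(β*r^2*b + γ*(r*a)))) / ((nr-1) * r * m * S * a * a) := by
    rw [eq_div_iff hcd]
    linear_combination h3
  rw [hd, hγ, hc, hm]
  refine le_of_eq_of_le
    (b := -((2*β*(nr-2)+(nr+2))/((nr+2)*(nr-1))) * (P*(r*a))) ?_ ?_
  · field_simp
    ring
  · have hQ : 0 < (2*β*(nr-2)+(nr+2))/((nr+2)*(nr-1)) :=
      div_pos (by nlinarith) (by nlinarith)
    have hPa : 0 < P*(r*a) := mul_pos hP (mul_pos hr ha0)
    nlinarith [mul_pos hQ hPa]


set_option maxHeartbeats 1000000 in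
/-- lower bound for Yamabe expanders. -/
theorem expander_lower_bound (n : ℕ) (hn : 3 ≤ n)
    (m β γ : ℝ)
    (hm : m = ((n : ℝ) - 2) / ((n : ℝ) + 2))
    (hβ : 0 < β)
    (hγ : γ = (2 * β - 1) / (1 - m))
    (u : Euc n → ℝ)
    (hpos : ∀ x, 0 < u x) (hsmooth : ContDiff ℝ (⊤ : ℕ∞) u)
    (hrad : IsRadial u) (hpde : YamabePDE m β γ u) :
    ∀ x : Euc n,
      (u 0 ^ (m - 1) + β * (1 - m) / (2 * ((n : ℝ) - 1)) * ‖x‖ ^ 2) ^ (-(1 / (1 - m)))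
        ≤ u x := by
  -- basic numeric facts
  have hn3 : (3:ℝ) ≤ (n:ℝ) := by exact_mod_cast hn
  have hn1 : (0:ℝ) < (n:ℝ) - 1 := by linarith
  have hn2 : (0:ℝ) < (n:ℝ) - 2 := by linarith
  have hn2p : (0:ℝ) < (n:ℝ) + 2 := by linarith
  have hm0 : 0 < m := by rw [hm]; positivity
  have hm1 : m < 1 := by rw [hm, div_lt_one hn2p]; linarith
  have h1m : 0 < 1 - m := by linarith
  -- the direction e and the profile f
  have hn0 : 0 < n := by omega
  set i0 : Fin n := ⟨0, hn0⟩ with hi0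
  set e : Euc n := EuclideanSpace.single i0 1 with he
  have hne : ‖e‖ = 1 := by rw [he, EuclideanSpace.norm_single]; norm_num
  set f : ℝ → ℝ := fun r => u (r • e) with hfdef
  have hfs : ContDiff ℝ (⊤:ℕ∞) f := hsmooth.comp (contDiff_id.smul contDiff_const)
  have hfpos : ∀ r, 0 < f r := fun r => hpos _
  have hf0 : f 0 = u 0 := by rw [hfdef]; simp
  have huf : ∀ y : Euc n, u y = f ‖y‖ := by
    intro y
    apply hrad
    rw [norm_smul, hne, mul_one, Real.norm_eq_abs, abs_of_nonneg (norm_nonneg y)]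
  -- 1-D derivatives
  set f1 : ℝ → ℝ := deriv f with hf1def
  set f2 : ℝ → ℝ := deriv f1 with hf2def
  have hf1s : ContDiff ℝ (⊤:ℕ∞) f1 := (contDiff_infty_iff_deriv.mp hfs).2
  have hf2s : ContDiff ℝ (⊤:ℕ∞) f2 := (contDiff_infty_iff_deriv.mp hf1s).2
  have hdf : ∀ r : ℝ, HasDerivAt f (f1 r) r := fun r =>
    ((hfs.differentiable (by simp)) r).hasDerivAt
  have hdf1 : ∀ r : ℝ, HasDerivAt f1 (f2 r) r := fun r =>
    ((hf1s.differentiable (by simp)) r).hasDerivAt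
  -- rpow-composed derivatives
  have hrpow : ∀ (q r : ℝ), HasDerivAt (fun s => f s ^ q) (q * f r ^ (q-1) * f1 r) r := by
    intro q r
    exact (Real.hasDerivAt_rpow_const (x := f r) (p := q) (Or.inl (hfpos r).ne')).comp r (hdf r)
  have hrpows : ∀ q : ℝ, ContDiff ℝ (⊤:ℕ∞) (fun s => f s ^ q) := by
    intro q
    rw [contDiff_iff_contDiffAt]
    intro s
    exact hfs.contDiffAt.rpow_const_of_ne (hfpos s).ne'
  set W : ℝ → ℝ := fun r => f r ^ m with hWdef
  set W1 : ℝ → ℝ := fun r => m * f r ^ (m-1) * f1 r with hW1def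
  have hdW : ∀ r, HasDerivAt W (W1 r) r := fun r => hrpow m r
  have hW1s : ContDiff ℝ (⊤:ℕ∞) W1 :=
    (contDiff_const.mul (hrpows (m-1))).mul hf1s
  set W2 : ℝ → ℝ := fun r => m * ((m-1) * f r ^ (m-2) * f1 r * f1 r + f r ^ (m-1) * f2 r)
    with hW2def
  have hdW1 : ∀ r, HasDerivAt W1 (W2 r) r := by
    intro r
    have h := (((hrpow (m-1) r).mul (hdf1 r)).const_mul m)
    have : m * ((m - 1) * f r ^ (m - 1 - 1) * f1 r * f1 r + f r ^ (m-1) * f2 r) = W2 r := by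
      rw [hW2def]; ring_nf
    rw [← this]
    have h2 : (fun y => m * (f y ^ (m-1) * f1 y)) = W1 := by
      funext s; simp only [hW1def]; ring
    simp only [Pi.mul_apply] at h
    rwa [h2] at h
  -- gradient term
  have hgrad : ∀ r : ℝ, ⟪(r • e : Euc n), gradient u (r • e)⟫ = r * f1 r := by
    intro r
    have hcur : HasDerivAt (fun s : ℝ => s • e) e r := by
      simpa using (hasDerivAt_id r).smul_const e
    have hcomp : HasDerivAt f (fderiv ℝ u (r • e) e) r :=
      ((hsmooth.differentiable (by simp)) (r • e)).hasFDerivAt.comp_hasDerivAt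
        r hcur
    have hfe : fderiv ℝ u (r • e) e = f1 r := by rw [hf1def, hcomp.deriv]
    have h1 : ⟪(r • e : Euc n), gradient u (r • e)⟫ = fderiv ℝ u (r • e) (r • e) := by
      rw [real_inner_comm]
      simp only [gradient]
      exact InnerProductSpace.toDual_symm_apply
    rw [h1, (fderiv ℝ u (r • e)).map_smul, smul_eq_mul, hfe]
  -- the function w = u^m and its radial profile
  set w : Euc n → ℝ := fun y => u y ^ m with hwdef
  have hws : ContDiff ℝ (⊤:ℕ∞) w := by
    rw [contDiff_iff_contDiffAt]
    intro y
    exact hsmooth.contDiffAt.rpow_const_of_ne (hpos y).ne'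
  have hwW : ∀ y : Euc n, w y = W ‖y‖ := by
    intro y
    simp only [hwdef, hWdef]
    rw [huf y]
  -- Laplacian of w at r • e, r > 0
  have hlap : ∀ r : ℝ, 0 < r → lap w (r • e) = W2 r + ((n:ℝ)-1) * (W1 r / r) := by
    intro r hr
    have hterm : ∀ i : Fin n,
        fderiv ℝ (fun y => fderiv ℝ w y (EuclideanSpace.single i 1)) (r • e)
          (EuclideanSpace.single i 1)
        = if i = i0 then W2 r else W1 r / r := by
      intro i
      rw [second_dir hws]
      by_cases hii : i = i0
      · subst hii
        simp only [if_pos]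
        have hfun : (fun t : ℝ => w (r • e + t • EuclideanSpace.single i0 1))
            = fun t => W (r + t) := by
          funext t
          rw [← he, ← add_smul]
        rw [hfun]
        have hd1 : deriv (fun t : ℝ => W (r + t)) = fun t => W1 (r + t) := by
          funext t
          rw [deriv_comp_const_add]
          exact (hdW (r+t)).deriv
        rw [hd1, deriv_comp_const_add]
        simpa using (hdW1 r).deriv
      · simp only [if_neg hii]
        set v : Euc n := EuclideanSpace.single i 1 with hv
        have hinner : ⟪e, v⟫ = 0 := by
          simp [he, hv, EuclideanSpace.inner_single_left, EuclideanSpace.single_apply,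
            hii, Ne.symm hii]
        have hnorm : ∀ t : ℝ, ‖r • e + t • v‖ = Real.sqrt (r^2 + t^2) := by
          intro t
          have hsq : ‖r • e + t • v‖^2 = r^2 + t^2 := by
            rw [norm_add_sq_real, real_inner_smul_left, real_inner_smul_right, hinner,
              norm_smul, norm_smul, hne, hv, EuclideanSpace.norm_single]
            simp [Real.norm_eq_abs, sq_abs]
          rw [← Real.sqrt_sq (norm_nonneg _), hsq]
        have hfun : (fun t : ℝ => w (r • e + t • v))
            = fun t => W (Real.sqrt (r^2 + t^2)) := by
          funext t
          rw [hwW, hnorm t]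
        rw [hfun]
        have hrt : ∀ t : ℝ, (0:ℝ) < r^2 + t^2 := fun t => by positivity
        have hη : ∀ t : ℝ, HasDerivAt (fun s : ℝ => Real.sqrt (r^2 + s^2))
            (t / Real.sqrt (r^2 + t^2)) t := by
          intro t
          have hin : HasDerivAt (fun s : ℝ => r^2 + s^2) (2*t) t := by
            simpa using (hasDerivAt_pow 2 t).const_add (r^2)
          have h := (Real.hasDerivAt_sqrt (hrt t).ne').comp t hin
          have hs0 : Real.sqrt (r^2 + t^2) ≠ 0 := (Real.sqrt_pos.mpr (hrt t)).ne'
          refine h.congr_deriv ?_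
          field_simp
        have hψ1 : deriv (fun t : ℝ => W (Real.sqrt (r^2 + t^2)))
            = fun t => W1 (Real.sqrt (r^2 + t^2)) * (t / Real.sqrt (r^2 + t^2)) := by
          funext t
          exact ((hdW _).comp t (hη t)).deriv
        rw [hψ1]
        have hA : HasDerivAt (fun t : ℝ => W1 (Real.sqrt (r^2 + t^2)))
            (deriv (fun t : ℝ => W1 (Real.sqrt (r^2 + t^2))) 0) 0 := by
          have hd : DifferentiableAt ℝ (fun t : ℝ => W1 (Real.sqrt (r^2 + t^2))) 0 :=
            DifferentiableAt.comp 0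
              ((hW1s.differentiable (by simp)) _)
              (hη 0).differentiableAt
          exact hd.hasDerivAt
        have hden : Real.sqrt (r^2 + 0^2) = r := by
          rw [show r^2 + 0^2 = r^2 by ring, Real.sqrt_sq hr.le]
        have hB : HasDerivAt (fun t : ℝ => t / Real.sqrt (r^2 + t^2)) (1/r) 0 := by
          have h := (hasDerivAt_id 0).div (hη 0) (by rw [hden]; exact hr.ne')
          refine h.congr_deriv ?_
          rw [hden]
          field_simp
          ring
        have hub := (hA.mul hB).deriv
        simp only [Pi.mul_def] at hub
        rw [hub, hden]
        field_simp
        ring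
    calc lap w (r • e)
        = ∑ i : Fin n, (if i = i0 then W2 r else W1 r / r) :=
          Finset.sum_congr rfl (fun i _ => hterm i)
      _ = W2 r + ((n:ℝ)-1) * (W1 r / r) := by
          rw [← Finset.add_sum_erase _ _ (Finset.mem_univ i0), if_pos rfl]
          congr 1
          have hconst : ∀ j ∈ Finset.univ.erase i0,
              (if j = i0 then W2 r else W1 r / r) = W1 r / r := by
            intro j hj
            rw [if_neg (Finset.ne_of_mem_erase hj)]
          rw [Finset.sum_congr rfl hconst, Finset.sum_const, Finset.card_erase_of_mem
            (Finset.mem_univ i0), Finset.card_univ, Fintype.card_fin, nsmul_eq_mul]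
          congr 1
          rw [Nat.cast_sub (by omega), Nat.cast_one]
  -- the radial ODE
  have hE : ∀ r : ℝ, 0 < r →
      ((n:ℝ)-1)/m * (W2 r + ((n:ℝ)-1) * (W1 r / r)) + β * (r * f1 r) + γ * f r = 0 := by
    intro r hr
    have h := hpde (r • e)
    rw [← hwdef] at h
    rw [hlap r hr, hgrad r, show u (r • e) = f r from rfl] at h
    exact h
  have hE2 : ∀ r : ℝ, 0 < r →
      ((n:ℝ)-1) * (r * W2 r + ((n:ℝ)-1) * W1 r) + m * (β*(r^2*f1 r) + γ*(r*f r)) = 0 := by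
    intro r hr
    have h3 : ((n:ℝ)-1) * (r * W2 r + ((n:ℝ)-1) * W1 r) + m * (β*(r^2*f1 r) + γ*(r*f r))
        = (((n:ℝ)-1)/m * (W2 r + ((n:ℝ)-1) * (W1 r / r)) + β * (r * f1 r) + γ * f r)
          * (m * r) := by
      field_simp
      ring
    rw [h3, hE r hr, zero_mul]
  -- the barrier constant and the monotone quantity H
  set c : ℝ := β * (1 - m) / (2 * ((n:ℝ) - 1)) with hc
  have hcpos : 0 < c := div_pos (mul_pos hβ h1m) (by linarith)
  set φ : ℝ → ℝ := fun r => f r ^ (m-1) with hφdef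
  set φ1 : ℝ → ℝ := fun r => (m-1) * f r ^ (m-2) * f1 r with hφ1def
  have hdφ : ∀ r, HasDerivAt φ (φ1 r) r := by
    intro r
    have h := hrpow (m-1) r
    rw [show m-1-1 = m-2 by ring] at h
    exact h
  set φ2 : ℝ → ℝ := fun r => (m-1) * ((m-2) * f r ^ (m-3) * f1 r * f1 r + f r ^ (m-2) * f2 r)
    with hφ2def
  have hdφ1 : ∀ r, HasDerivAt φ1 (φ2 r) r := by
    intro r
    have h := ((hrpow (m-2) r).mul (hdf1 r)).const_mul (m-1)
    have h2 : (fun y => (m-1) * (f y ^ (m-2) * f1 y)) = φ1 := by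
      funext s; simp only [hφ1def]; ring
    simp only [Pi.mul_apply] at h
    rw [h2] at h
    have h3 : (m-1) * ((m-2) * f r ^ (m-2-1) * f1 r * f1 r + f r ^ (m-2) * f2 r) = φ2 r := by
      simp only [hφ2def]
      rw [show m-2-1 = m-3 by ring]
    rwa [h3] at h
  set H : ℝ → ℝ := fun r => r^(n-1) * (φ1 r - 2*c*r) * f r with hHdef
  have hdH : ∀ r : ℝ, HasDerivAt H
      ((((n:ℝ)-1) * r^(n-2) * (φ1 r - 2*c*r) + r^(n-1) * (φ2 r - 2*c)) * f r
        + r^(n-1) * (φ1 r - 2*c*r) * f1 r) r := by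
    intro r
    have hp : HasDerivAt (fun s : ℝ => s^(n-1)) (((n:ℝ)-1) * r^(n-2)) r := by
      have h0 := hasDerivAt_pow (n-1) r
      have he1 : ((n-1:ℕ):ℝ) * r^(n-1-1) = ((n:ℝ)-1) * r^(n-2) := by
        rw [Nat.cast_sub (by omega), Nat.cast_one, show n-1-1 = n-2 by omega]
      rwa [he1] at h0
    have hmid : HasDerivAt (fun s => φ1 s - 2*c*s) (φ2 r - 2*c) r := by
      have := (hdφ1 r).sub ((hasDerivAt_id r).const_mul (2*c))
      exact this.congr_deriv (by ring)
    exact (hp.mul hmid).mul (hdf r)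
  -- the derivative of H is nonpositive on (0, ∞)
  have hDneg : ∀ r : ℝ, 0 < r →
      (((n:ℝ)-1) * r^(n-2) * (φ1 r - 2*c*r) + r^(n-1) * (φ2 r - 2*c)) * f r
        + r^(n-1) * (φ1 r - 2*c*r) * f1 r ≤ 0 := by
    intro r hr
    have h2 := hE2 r hr
    simp only [hW1def, hW2def] at h2
    simp only [hφ1def, hφ2def]
    have hrp : r^(n-1) = r^(n-2)*r := by
      rw [← pow_succ]
      congr 1
      omega
    rw [hrp]
    set S : ℝ := f r ^ (m-3) with hS
    have hb2 : f r ^ (m-2) = S * f r := by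
      rw [show m-2 = (m-3)+1 by ring, Real.rpow_add (hfpos r), Real.rpow_one, hS]
    have hb1 : f r ^ (m-1) = S * f r * f r := by
      rw [show m-1 = ((m-3)+1)+1 by ring, Real.rpow_add (hfpos r), Real.rpow_one,
        Real.rpow_add (hfpos r), Real.rpow_one, hS]
    rw [hb1, hb2] at h2
    rw [hb2]
    set a : ℝ := f r with ha
    set b : ℝ := f1 r with hb
    set dd : ℝ := f2 r with hdd
    have ha0 : 0 < a := hfpos r
    have hS0 : 0 < S := Real.rpow_pos_of_pos (hfpos r) _
    have h2' : ((n:ℝ)-1) * (r * (m*((m-1)*(S*a)*b*b + S*a*a*dd))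
        + ((n:ℝ)-1)*(m*(S*a*a)*b)) + m*(β*(r^2*b) + γ*(r*a)) = 0 := by
      linear_combination h2
    have hfin := key_ineq (n:ℝ) β m γ c S a b dd r (r^(n-2)) hn3 hβ hr ha0 hS0
      (pow_pos hr _) hm hγ hc h2'
    linarith [hfin]
  -- H is antitone on [0, ∞)
  have hφ1c : Continuous φ1 := by
    have h : ContDiff ℝ (⊤:ℕ∞) φ1 := (contDiff_const.mul (hrpows (m-2))).mul hf1s
    exact h.continuous
  have hHcont : Continuous H := by
    exact ((continuous_pow (n-1)).mul
      (hφ1c.sub ((continuous_const.mul continuous_id)))).mul hfs.continuous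
  have hHanti : AntitoneOn H (Set.Ici 0) := by
    apply antitoneOn_of_deriv_nonpos (convex_Ici 0) hHcont.continuousOn
    · intro x hx
      exact ((hdH x).differentiableAt).differentiableWithinAt
    · intro x hx
      rw [interior_Ici] at hx
      rw [(hdH x).deriv]
      exact hDneg x hx
  have hH0 : H 0 = 0 := by
    simp only [hHdef]
    rw [zero_pow (by omega : n-1 ≠ 0)]
    ring
  have hφ1le : ∀ r : ℝ, 0 < r → φ1 r ≤ 2*c*r := by
    intro r hr
    have h := hHanti Set.self_mem_Ici (Set.mem_Ici.mpr hr.le) hr.le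
    rw [hH0] at h
    simp only [hHdef] at h
    nlinarith [pow_pos hr (n-1), hfpos r, mul_pos (pow_pos hr (n-1)) (hfpos r)]
  -- integrate the gradient bound
  set ψ : ℝ → ℝ := fun r => φ r - c*r^2 with hψdef
  have hdψ : ∀ r : ℝ, HasDerivAt ψ (φ1 r - 2*c*r) r := by
    intro r
    have hsq : HasDerivAt (fun s : ℝ => s^2) (2*r) r := by
      simpa using hasDerivAt_pow 2 r
    have h := (hdφ r).sub (hsq.const_mul c)
    have hv : φ1 r - c * (2*r) = φ1 r - 2*c*r := by ring
    rw [← hv]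
    exact h
  have hψanti : AntitoneOn ψ (Set.Ici 0) := by
    apply antitoneOn_of_deriv_nonpos (convex_Ici 0)
    · exact ((hrpows (m-1)).continuous.sub
        (continuous_const.mul (continuous_pow 2))).continuousOn
    · intro x hx
      exact (hdψ x).differentiableAt.differentiableWithinAt
    · intro x hx
      rw [interior_Ici] at hx
      rw [(hdψ x).deriv]
      have := hφ1le x hx
      linarith
  -- conclusion
  intro x
  have h := hψanti Set.self_mem_Ici (Set.mem_Ici.mpr (norm_nonneg x)) (norm_nonneg x)
  simp only [hψdef] at h
  have hφx : φ ‖x‖ = u x ^ (m-1) := by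
    simp only [hφdef]
    rw [← huf x]
  have hφ0 : φ 0 = u 0 ^ (m-1) := by
    simp only [hφdef]
    rw [hf0]
  rw [hφx, hφ0] at h
  norm_num at h
  have hle : u x ^ (m-1) ≤ u 0 ^ (m-1) + c * ‖x‖^2 := by linarith
  have hbase : 0 < u x ^ (m-1) := Real.rpow_pos_of_pos (hpos x) _
  have hz : -(1/(1-m)) ≤ 0 := by
    have h0 : 0 ≤ 1/(1-m) := div_nonneg zero_le_one h1m.le
    linarith
  have h2 := Real.rpow_le_rpow_of_nonpos hbase hle hz
  refine le_trans h2 ?_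
  rw [← Real.rpow_mul (hpos x).le]
  rw [show (m-1) * (-(1/(1-m))) = 1 by field_simp; ring]
  rw [Real.rpow_one]
end
end

section
/- Let n ≥ 3 be an integer, m = (n−2)/(n+2), 0 < β < 1/2, and γ = (2β−1)/(1−m) (so γ < 0; expander case ρ = −1). If u is a positive smooth radially symmetric solution of ((n−1)/m)·Δ(u^m) + β·(x·∇u) + γ·u = 0 on ℝⁿ, then for every x ∈ ℝⁿ with |x| ≥ 1 one has u(x) ≤ M·|x|^{−γ/β}, where M is the (common) value of u on the unit sphere {|y| = 1}. -/
open Real MeasureTheory Metric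
open scoped Topology RealInnerProductSpace

noncomputable section

/-! ### Auxiliary lemmas -/

lemma aux_line {n : ℕ} (x v : Euc n) (t : ℝ) :
    HasDerivAt (fun s : ℝ => x + s • v) v t := by
  simpa using ((hasDerivAt_id t).smul_const v).const_add x

lemma gradient_inner_eq {n : ℕ} (f : Euc n → ℝ) (x y : Euc n)
    (h : DifferentiableAt ℝ f x) :
    ⟪gradient f x, y⟫ = fderiv ℝ f x y := by
  have h2 : HasFDerivAt f (InnerProductSpace.toDual ℝ (Euc n) (gradient f x)) x :=
    h.hasGradientAt.hasFDerivAt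
  rw [h2.fderiv]
  exact (InnerProductSpace.toDual_apply_apply).symm

lemma lineDeriv2 {n : ℕ} (f : Euc n → ℝ) (hf : ContDiff ℝ (⊤ : ℕ∞) f) (x v : Euc n) :
    fderiv ℝ (fun y => fderiv ℝ f y v) x v
      = deriv (deriv (fun t : ℝ => f (x + t • v))) 0 := by
  have hd1 : ∀ t : ℝ, HasDerivAt (fun s : ℝ => f (x + s • v)) (fderiv ℝ f (x + t • v) v) t :=
    fun t => ((hf.differentiable (by simp)
      (x + t • v)).hasFDerivAt).comp_hasDerivAt t (aux_line x v t)
  have h1 : deriv (fun s : ℝ => f (x + s • v)) = fun t => fderiv ℝ f (x + t • v) v :=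
    funext fun t => (hd1 t).deriv
  rw [h1]
  have hF : ContDiff ℝ (⊤ : ℕ∞) (fun y => fderiv ℝ f y v) :=
    (hf.fderiv_right (by simp)).clm_apply contDiff_const
  have hd2 : HasDerivAt (fun t : ℝ => fderiv ℝ f (x + t • v) v)
      (fderiv ℝ (fun y => fderiv ℝ f y v) (x + (0:ℝ) • v) v) 0 :=
    by have := ((hF.differentiable (by simp)
      (x + (0:ℝ) • v)).hasFDerivAt).comp_hasDerivAt 0 (aux_line x v 0); exact this
  simp only [zero_smul, add_zero] at hd2
  exact hd2.deriv.symm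

lemma aux_norm_orth {n : ℕ} (i j : Fin n) (hij : j ≠ i) (r t : ℝ) :
    ‖r • EuclideanSpace.single i (1:ℝ) + t • EuclideanSpace.single j (1:ℝ)‖
      = Real.sqrt (r ^ 2 + t ^ 2) := by
  have hsq : ‖r • EuclideanSpace.single i (1:ℝ) + t • EuclideanSpace.single j (1:ℝ)‖ ^ 2
      = r ^ 2 + t ^ 2 := by
    rw [norm_add_sq_real, real_inner_smul_left, real_inner_smul_right]
    have h0 : ⟪EuclideanSpace.single i (1:ℝ), EuclideanSpace.single j (1:ℝ)⟫ = 0 := by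
      rw [EuclideanSpace.inner_single_left]
      simp [EuclideanSpace.single_apply, hij, Ne.symm hij]
    rw [h0]
    simp [norm_smul, mul_pow, abs_pow, sq_abs]
  rw [← hsq, Real.sqrt_sq (norm_nonneg _)]

lemma radial_second_deriv (F : ℝ → ℝ) (hF : ContDiff ℝ (⊤:ℕ∞) F) (r : ℝ) (hr : 0 < r) :
    deriv (deriv (fun t : ℝ => F (Real.sqrt (r^2 + t^2)))) 0 = deriv F r / r := by
  have hs : ∀ t : ℝ, (0:ℝ) < r^2 + t^2 := fun t => by positivity
  have hh : ∀ t : ℝ, HasDerivAt (fun t : ℝ => Real.sqrt (r^2 + t^2))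
      (t / Real.sqrt (r^2+t^2)) t := by
    intro t
    have h1 : HasDerivAt (fun t : ℝ => r^2 + t^2) (2*t) t := by
      simpa using ((hasDerivAt_pow 2 t).const_add (r^2))
    have h2 := (hasDerivAt_sqrt (hs t).ne').comp t h1
    refine h2.congr_deriv ?_
    have hne : Real.sqrt (r^2+t^2) ≠ 0 := (Real.sqrt_pos.mpr (hs t)).ne'
    rw [div_mul_eq_mul_div, one_mul, mul_div_mul_left _ _ two_ne_zero]
  have hFd : Differentiable ℝ F := hF.differentiable (by simp)
  have hF' : Differentiable ℝ (deriv F) :=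
    ((contDiff_infty_iff_deriv.mp hF).2).differentiable (by simp)
  have hcomp : ∀ t, HasDerivAt (fun t : ℝ => F (Real.sqrt (r^2+t^2)))
      (deriv F (Real.sqrt (r^2+t^2)) * (t / Real.sqrt (r^2+t^2))) t :=
    fun t => ((hFd _).hasDerivAt).comp t (hh t)
  have hderiv : deriv (fun t : ℝ => F (Real.sqrt (r^2+t^2)))
      = fun t => (deriv F (Real.sqrt (r^2+t^2)) / Real.sqrt (r^2+t^2)) * t := by
    funext t; rw [(hcomp t).deriv]; ring
  rw [hderiv]
  have hnum : HasDerivAt (fun t : ℝ => deriv F (Real.sqrt (r^2+t^2)))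
      (deriv (deriv F) (Real.sqrt (r^2+0^2)) * (0 / Real.sqrt (r^2+0^2))) 0 :=
    ((hF' _).hasDerivAt).comp 0 (hh 0)
  have hden0 : Real.sqrt (r^2+0^2) ≠ 0 := by positivity
  have hA := hnum.div (hh 0) hden0
  have hfin := (hA.mul (hasDerivAt_id' (x := (0:ℝ)))).deriv
  rw [show (fun t : ℝ => deriv F (Real.sqrt (r^2+t^2)) / Real.sqrt (r^2+t^2) * t)
    = ((fun t => deriv F (Real.sqrt (r^2+t^2))) / fun t => Real.sqrt (r^2+t^2)) * (fun x => x)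
    from rfl, hfin]
  have h00 : Real.sqrt (r^2+0^2) = r := by
    simp [Real.sqrt_sq hr.le]
  simp [h00]
  rw [Real.sqrt_sq hr.le]

lemma lap_radial {n : ℕ} (i0 : Fin n) (f : Euc n → ℝ) (hf : ContDiff ℝ (⊤:ℕ∞) f)
    (hrad : IsRadial f) (r : ℝ) (hr : 0 < r) :
    lap f (r • EuclideanSpace.single i0 (1:ℝ))
      = deriv (deriv (fun s : ℝ => f (s • EuclideanSpace.single i0 (1:ℝ)))) r
        + ((n:ℝ)-1) * (deriv (fun s : ℝ => f (s • EuclideanSpace.single i0 (1:ℝ))) r / r) := by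
  have hn : 0 < n := i0.pos
  set e0 : Euc n := EuclideanSpace.single i0 (1:ℝ) with he0
  set F : ℝ → ℝ := fun s => f (s • e0) with hF
  have hne0 : ‖e0‖ = 1 := by simp [he0]
  have hFf : ∀ y : Euc n, f y = F ‖y‖ := by
    intro y
    apply hrad
    rw [norm_smul, hne0]
    simp [abs_of_nonneg (norm_nonneg y)]
  have hFsmooth : ContDiff ℝ (⊤:ℕ∞) F :=
    hf.comp (contDiff_id.smul contDiff_const)
  have hterm : ∀ i : Fin n,
      fderiv ℝ (fun y => fderiv ℝ f y (EuclideanSpace.single i 1)) (r • e0)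
        (EuclideanSpace.single i 1)
      = deriv (deriv (fun t : ℝ => f (r • e0 + t • EuclideanSpace.single i 1))) 0 :=
    fun i => lineDeriv2 f hf _ _
  have haxis : deriv (deriv (fun t : ℝ => f (r • e0 + t • EuclideanSpace.single i0 1))) 0
      = deriv (deriv F) r := by
    have hfun : (fun t : ℝ => f (r • e0 + t • EuclideanSpace.single i0 1))
        = fun t => F (r + t) := by
      funext t
      rw [hF]
      simp only [← he0, ← add_smul]
    rw [hfun]
    have h1 : (deriv fun t : ℝ => F (r + t)) = fun t => deriv F (r + t) :=
      funext fun t => deriv_comp_const_add F r t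
    rw [h1]
    have := deriv_comp_const_add (deriv F) r 0
    simpa using this
  have hoff : ∀ i : Fin n, i ≠ i0 →
      deriv (deriv (fun t : ℝ => f (r • e0 + t • EuclideanSpace.single i 1))) 0
        = deriv F r / r := by
    intro i hi
    have hfun : (fun t : ℝ => f (r • e0 + t • EuclideanSpace.single i 1))
        = fun t => F (Real.sqrt (r^2 + t^2)) := by
      funext t
      rw [hFf (r • e0 + t • EuclideanSpace.single i 1), he0,
        aux_norm_orth i0 i hi r t]
    rw [hfun]
    exact radial_second_deriv F hFsmooth r hr
  unfold lap
  simp only [hterm]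
  rw [← Finset.sum_erase_add _ _ (Finset.mem_univ i0), haxis]
  have hconst : ∑ i ∈ Finset.univ.erase i0,
      deriv (deriv (fun t : ℝ => f (r • e0 + t • EuclideanSpace.single i 1))) 0
      = ∑ _i ∈ Finset.univ.erase i0, (deriv F r / r) := by
    apply Finset.sum_congr rfl
    intro i hi
    exact hoff i (Finset.ne_of_mem_erase hi)
  rw [hconst, Finset.sum_const, Finset.card_erase_of_mem (Finset.mem_univ i0)]
  simp only [Finset.card_univ, Fintype.card_fin, nsmul_eq_mul]
  rw [Nat.cast_sub hn]
  push_cast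
  ring

lemma oneD (m β γ c nR : ℝ) (hnR : 3 ≤ nR) (hm0 : 0 < m) (hm1 : m < 1) (hβ : 0 < β)
    (hγ : γ < 0) (hc : c = -(γ / β))
    (U : ℝ → ℝ) (hU : ContDiff ℝ (⊤ : ℕ∞) U) (hUpos : ∀ s, 0 < U s)
    (hODE : ∀ r : ℝ, 0 < r →
      (nR - 1) / m * (deriv (deriv (fun s => U s ^ m)) r
          + (nR - 1) * (deriv (fun s => U s ^ m) r / r))
        + β * (r * deriv U r) + γ * U r = 0) :
    ∀ r : ℝ, 1 ≤ r → U r ≤ U 1 * r ^ c := by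
  have hUd : Differentiable ℝ U := hU.differentiable (by simp)
  have hU'c : ContDiff ℝ (⊤ : ℕ∞) (deriv U) := by
    have := (contDiff_infty_iff_deriv.mp (by exact_mod_cast hU)).2
    exact_mod_cast this
  have hU'd : Differentiable ℝ (deriv U) := hU'c.differentiable (by simp)
  have hγβ : γ / β = -c := by rw [hc]; ring
  have hcpos : 0 < c := by
    have : γ / β < 0 := div_neg_of_neg_of_pos hγ hβ
    rw [hc]; linarith
  have hV'at : ∀ s, HasDerivAt (fun s => U s ^ m)
      (deriv U s * m * U s ^ (m - 1)) s :=
    fun s => ((hUd s).hasDerivAt).rpow_const (Or.inl (hUpos s).ne')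
  have hV' : deriv (fun s => U s ^ m) = fun s => deriv U s * m * U s ^ (m - 1) :=
    funext fun s => (hV'at s).deriv
  set φ : ℝ → ℝ := fun s => s * deriv U s + (γ / β) * U s with hφdef
  have hφat : ∀ s, HasDerivAt φ
      (deriv U s + s * deriv (deriv U) s + (γ / β) * deriv U s) s := by
    intro s
    have h1 : HasDerivAt (fun s : ℝ => s * deriv U s)
        (1 * deriv U s + s * deriv (deriv U) s) s :=
      (hasDerivAt_id' (x := s)).mul ((hU'd s).hasDerivAt)
    have h2 : HasDerivAt (fun s : ℝ => (γ / β) * U s) ((γ / β) * deriv U s) s :=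
      ((hUd s).hasDerivAt).const_mul _
    have := h1.add h2
    exact this.congr_deriv (by ring)
  have hφcont : Continuous φ := by
    apply Continuous.add
    · exact continuous_id.mul hU'c.continuous
    · exact continuous_const.mul hUd.continuous
  -- φ is negative on [0,∞)
  have hφ0 : ∀ s : ℝ, 0 ≤ s → φ s < 0 := by
    by_contra hcon
    push_neg at hcon
    obtain ⟨s0, hs0, hφs0⟩ := hcon
    have hφzero : φ 0 < 0 := by
      have h0 : φ 0 = (γ / β) * U 0 := by simp [hφdef]
      rw [h0, hγβ]
      have := hUpos 0
      nlinarith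
    have hs0pos : 0 < s0 := by
      rcases eq_or_lt_of_le hs0 with h | h
      · exfalso; rw [← h] at hφs0; linarith
      · exact h
    set K : Set ℝ := {r | r ∈ Set.Icc 0 s0 ∧ 0 ≤ φ r} with hK
    have hKclosed : IsClosed K := by
      have hKeq : K = Set.Icc 0 s0 ∩ {r | 0 ≤ φ r} := rfl
      rw [hKeq]
      exact isClosed_Icc.inter (isClosed_le continuous_const hφcont)
    have hKne : K.Nonempty := ⟨s0, ⟨hs0, le_refl s0⟩, hφs0⟩
    have hKbdd : BddBelow K := ⟨0, fun r hr => hr.1.1⟩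
    set r0 := sInf K with hr0def
    have hr0K : r0 ∈ K := hKclosed.csInf_mem hKne hKbdd
    have hr0pos : 0 < r0 := by
      rcases eq_or_lt_of_le hr0K.1.1 with h | h
      · exfalso; have := hr0K.2; rw [← h] at this; linarith
      · exact h
    have hlt : ∀ r, 0 ≤ r → r < r0 → φ r < 0 := by
      intro r h0 hrlt
      by_contra hge
      push_neg at hge
      have hrK : r ∈ K := ⟨⟨h0, le_trans hrlt.le hr0K.1.2⟩, hge⟩
      exact absurd (csInf_le hKbdd hrK) (not_le.mpr hrlt)
    have hφr0 : φ r0 = 0 := by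
      refine le_antisymm ?_ hr0K.2
      have htend : Filter.Tendsto φ (nhdsWithin r0 (Set.Iio r0)) (nhds (φ r0)) :=
        (hφcont.continuousAt).continuousWithinAt
      refine le_of_tendsto htend ?_
      filter_upwards [Ioo_mem_nhdsLT_of_mem (Set.mem_Ioc.mpr ⟨hr0pos, le_refl r0⟩)] with r hr
      exact (hlt r hr.1.le hr.2).le
    -- notation
    set A := U r0 with hA
    set D1 := deriv U r0 with hD1
    set D2 := deriv (deriv U) r0 with hD2
    have hApos : 0 < A := hUpos r0
    have hr0ne : r0 ≠ 0 := hr0pos.ne'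
    have hUr0 : r0 * D1 = c * A := by
      have h := hφr0
      simp only [hφdef, hγβ] at h
      linarith
    have hlin : β * (r0 * D1) + γ * A = 0 := by
      rw [hUr0, hc]
      field_simp
      ring
    have hODEr0 := hODE r0 hr0pos
    have h2 : (nR - 1) / m * (deriv (deriv (fun s => U s ^ m)) r0
        + (nR - 1) * (deriv (fun s => U s ^ m) r0 / r0)) = 0 := by
      linarith [hODEr0, hlin]
    have ha : (nR - 1) / m ≠ 0 := div_ne_zero (by linarith) hm0.ne'
    have h3 : deriv (deriv (fun s => U s ^ m)) r0
        + (nR - 1) * (deriv (fun s => U s ^ m) r0 / r0) = 0 :=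
      (mul_eq_zero.mp h2).resolve_left ha
    set P := A ^ (m - 1 - 1) with hP
    have hPpos : 0 < P := Real.rpow_pos_of_pos hApos _
    have hpow : A ^ (m - 1) = P * A := by
      rw [hP, ← Real.rpow_add_one hApos.ne' (m - 1 - 1)]
      norm_num
    have hV''at : HasDerivAt (deriv (fun s => U s ^ m))
        (D2 * m * A ^ (m - 1) + (D1 * m) * (D1 * (m - 1) * A ^ (m - 1 - 1))) r0 := by
      rw [hV']
      exact ((hU'd r0).hasDerivAt.mul_const m).mul
        (((hUd r0).hasDerivAt).rpow_const (Or.inl hApos.ne'))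
    have hV''val : deriv (deriv (fun s => U s ^ m)) r0
        = D2 * m * (P * A) + (D1 * m) * (D1 * (m - 1) * P) := by
      rw [hV''at.deriv, hpow, ← hP]
    have hV'val : deriv (fun s => U s ^ m) r0 = D1 * m * (P * A) := by
      rw [hV']
      simp only [← hA, ← hD1]
      rw [hpow]
    have heq : D2 * m * (P * A) + (D1 * m) * (D1 * (m - 1) * P)
        + (nR - 1) * ((D1 * m * (P * A)) / r0) = 0 := by
      rw [← hV''val, ← hV'val]; linarith [h3]
    have hdiv : (D1 * m * (P * A)) / r0 * r0 = D1 * m * (P * A) :=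
      div_mul_cancel₀ _ hr0ne
    have heq2 : r0 * (D2 * m * (P * A)) + r0 * ((D1 * m) * (D1 * (m - 1) * P))
        + (nR - 1) * (D1 * m * (P * A)) = 0 := by
      linear_combination r0 * heq - (nR - 1) * hdiv
    have hkey : (m * P) * (r0 * (A * D2) + r0 * ((m - 1) * D1 ^ 2) + (nR - 1) * (D1 * A))
        = (m * P) * 0 := by
      rw [mul_zero]
      linear_combination heq2
    have hmP : (m * P) ≠ 0 := (mul_pos hm0 hPpos).ne'
    have hkey2 : r0 * (A * D2) + r0 * ((m - 1) * D1 ^ 2) + (nR - 1) * (D1 * A) = 0 :=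
      mul_left_cancel₀ hmP hkey
    have hφ' : deriv φ r0 = D1 + r0 * D2 + (γ / β) * D1 := (hφat r0).deriv
    have hφ'neg : deriv φ r0 < 0 := by
      rw [hφ', hγβ]
      have hgoal : (D1 + r0 * D2 + (-c) * D1) * (A * r0)
          = c * A ^ 2 * (2 - nR - m * c) := by
        linear_combination r0 * hkey2
          + (A * (1 - c) - (m - 1) * (r0 * D1 + c * A) - (nR - 1) * A) * hUr0
      have h1 : 2 - nR - m * c < 0 := by
        have := mul_pos hm0 hcpos
        linarith
      have hneg : c * A ^ 2 * (2 - nR - m * c) < 0 :=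
        mul_neg_of_pos_of_neg (by positivity) h1
      by_contra hge
      push_neg at hge
      have h2 := mul_nonneg hge (mul_pos hApos hr0pos).le
      linarith
    -- slope contradiction
    have hslope : Filter.Tendsto (slope φ r0) (nhdsWithin r0 {r0}ᶜ)
        (nhds (deriv φ r0)) :=
      hasDerivAt_iff_tendsto_slope.mp (hφat r0 |>.congr_deriv hφ'.symm)
    have hslope' : Filter.Tendsto (slope φ r0) (nhdsWithin r0 (Set.Iio r0))
        (nhds (deriv φ r0)) :=
      hslope.mono_left (nhdsWithin_mono r0 (fun y hy => ne_of_lt hy))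
    have hev : ∀ᶠ r in nhdsWithin r0 (Set.Iio r0), slope φ r0 r < 0 :=
      hslope'.eventually (gt_mem_nhds hφ'neg)
    have hev2 : ∀ᶠ r in nhdsWithin r0 (Set.Iio r0), r ∈ Set.Ioo 0 r0 :=
      Filter.eventually_of_mem
        (Ioo_mem_nhdsLT_of_mem (Set.mem_Ioc.mpr ⟨hr0pos, le_refl r0⟩)) (fun r hr => hr)
    obtain ⟨r, hrs, hrI⟩ := (hev.and hev2).exists
    rw [slope_def_field, hφr0, sub_zero] at hrs
    have hφrpos : 0 < φ r := by
      rcases div_neg_iff.mp hrs with ⟨h1, _⟩ | ⟨_, h2⟩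
      · exact h1
      · exfalso; have := hrI.2; linarith
    have := hlt r hrI.1.le hrI.2
    linarith
  -- conclusion from φ < 0
  intro r hr
  have hrpos : (0:ℝ) < r := lt_of_lt_of_le one_pos hr
  set G : ℝ → ℝ := fun s => U s * s ^ (-c) with hGdef
  have hGat : ∀ s : ℝ, 0 < s → HasDerivAt G
      (deriv U s * s ^ (-c) + U s * (-c * s ^ (-c - 1))) s := by
    intro s hs
    exact ((hUd s).hasDerivAt).mul (Real.hasDerivAt_rpow_const (Or.inl hs.ne'))
  have hGderiv_neg : ∀ s : ℝ, 0 < s → deriv G s < 0 := by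
    intro s hs
    rw [(hGat s hs).deriv]
    have hsp : s ^ (-c) = s ^ (-c - 1) * s := by
      rw [← Real.rpow_add_one hs.ne' (-c - 1)]
      norm_num
    rw [hsp]
    have hppos : 0 < s ^ (-c - 1) := Real.rpow_pos_of_pos hs _
    have hφs : φ s < 0 := hφ0 s hs.le
    have hφs' : s * deriv U s + (γ / β) * U s < 0 := by
      simpa [hφdef] using hφs
    rw [hγβ] at hφs'
    nlinarith
  have hGanti : StrictAntiOn G (Set.Icc 1 r) := by
    apply strictAntiOn_of_deriv_neg (convex_Icc 1 r)
    · intro s hs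
      exact ((hGat s (lt_of_lt_of_le one_pos hs.1)).differentiableAt.continuousAt).continuousWithinAt
    · intro s hs
      rw [interior_Icc] at hs
      exact hGderiv_neg s (lt_trans one_pos hs.1)
  have hG1 : G 1 = U 1 := by
    simp [hGdef, Real.one_rpow]
  rcases eq_or_lt_of_le hr with heq1 | hlt1
  · rw [← heq1]
    simp [Real.one_rpow]
  · have hGr : G r < G 1 :=
      hGanti (Set.mem_Icc.mpr ⟨le_refl 1, hr⟩) (Set.mem_Icc.mpr ⟨hr, le_refl r⟩) hlt1
    rw [hG1] at hGr
    have hrc : r ^ (-c) * r ^ c = 1 := by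
      rw [← Real.rpow_add hrpos]
      simp
    have hGreq : G r = U r * r ^ (-c) := rfl
    have hstep : U r = U r * r ^ (-c) * r ^ c := by
      rw [mul_assoc, hrc, mul_one]
    rw [hstep]
    apply mul_le_mul_of_nonneg_right _ (Real.rpow_pos_of_pos hrpos c).le
    rw [← hGreq]
    exact hGr.le

/-- upper bound for Yamabe expanders with γ < 0. -/
theorem expander_upper_bound (n : ℕ) (hn : 3 ≤ n)
    (m β γ : ℝ)
    (hm : m = ((n : ℝ) - 2) / ((n : ℝ) + 2))
    (hβ : 0 < β) (hβ' : β < 1 / 2)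
    (hγ : γ = (2 * β - 1) / (1 - m))
    (u : Euc n → ℝ)
    (hpos : ∀ x, 0 < u x) (hsmooth : ContDiff ℝ (⊤ : ℕ∞) u)
    (hrad : IsRadial u) (hpde : YamabePDE m β γ u)
    (M : ℝ) (hM : ∀ x : Euc n, ‖x‖ = 1 → u x = M) :
    ∀ x : Euc n, 1 ≤ ‖x‖ → u x ≤ M * ‖x‖ ^ (-(γ / β)) := by
  intro x hx
  have hn0 : 0 < n := by omega
  have hnR : (3:ℝ) ≤ (n:ℝ) := by exact_mod_cast hn
  have hm0 : 0 < m := by rw [hm]; apply div_pos <;> linarith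
  have hm1 : m < 1 := by
    rw [hm, div_lt_one (by linarith)]; linarith
  have hγneg : γ < 0 := by
    rw [hγ]; apply div_neg_of_neg_of_pos <;> linarith
  set i0 : Fin n := ⟨0, hn0⟩ with hi0
  have hne0 : ‖(EuclideanSpace.single i0 (1:ℝ) : Euc n)‖ = 1 := by simp
  have hUx : ∀ y : Euc n,
      u y = (fun s : ℝ => u (s • EuclideanSpace.single i0 (1:ℝ))) ‖y‖ := by
    intro y
    apply hrad
    rw [norm_smul, hne0]
    simp [abs_of_nonneg (norm_nonneg y)]
  have hUsmooth : ContDiff ℝ (⊤:ℕ∞)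
      (fun s : ℝ => u (s • EuclideanSpace.single i0 (1:ℝ))) :=
    hsmooth.comp (contDiff_id.smul contDiff_const)
  have hUpos : ∀ s : ℝ, 0 < u (s • EuclideanSpace.single i0 (1:ℝ)) := fun s => hpos _
  have hfm : ContDiff ℝ (⊤:ℕ∞) (fun y : Euc n => u y ^ m) :=
    hsmooth.rpow_const_of_ne (fun y => (hpos y).ne')
  have hradm : IsRadial (fun y : Euc n => u y ^ m) := fun a b h => by simp only []; rw [hrad a b h]
  have hgrad : ∀ r : ℝ,
      ⟪(r • EuclideanSpace.single i0 (1:ℝ) : Euc n),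
        gradient u (r • EuclideanSpace.single i0 (1:ℝ))⟫
      = r * deriv (fun s : ℝ => u (s • EuclideanSpace.single i0 (1:ℝ))) r := by
    intro r
    have hline : HasDerivAt (fun s : ℝ => s • (EuclideanSpace.single i0 (1:ℝ) : Euc n))
        (EuclideanSpace.single i0 (1:ℝ)) r := by
      simpa using (hasDerivAt_id r).smul_const (EuclideanSpace.single i0 (1:ℝ) : Euc n)
    have hdiff : DifferentiableAt ℝ u (r • EuclideanSpace.single i0 (1:ℝ)) :=
      hsmooth.differentiable (by simp) _
    have hdU : HasDerivAt (fun s : ℝ => u (s • EuclideanSpace.single i0 (1:ℝ)))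
        (fderiv ℝ u (r • EuclideanSpace.single i0 (1:ℝ)) (EuclideanSpace.single i0 (1:ℝ))) r :=
      (hdiff.hasFDerivAt).comp_hasDerivAt r hline
    rw [real_inner_comm, gradient_inner_eq u _ _ hdiff, _root_.map_smul, smul_eq_mul, hdU.deriv]
  have hODE : ∀ r : ℝ, 0 < r →
      ((n:ℝ) - 1) / m * (deriv (deriv (fun s : ℝ =>
            (fun s : ℝ => u (s • EuclideanSpace.single i0 (1:ℝ))) s ^ m)) r
          + ((n:ℝ) - 1) * (deriv (fun s : ℝ =>
            (fun s : ℝ => u (s • EuclideanSpace.single i0 (1:ℝ))) s ^ m) r / r))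
        + β * (r * deriv (fun s : ℝ => u (s • EuclideanSpace.single i0 (1:ℝ))) r)
        + γ * (fun s : ℝ => u (s • EuclideanSpace.single i0 (1:ℝ))) r = 0 := by
    intro r hr
    have h := hpde (r • EuclideanSpace.single i0 (1:ℝ))
    rw [lap_radial i0 (fun y => u y ^ m) hfm hradm r hr, hgrad r] at h
    exact h
  have honeD := oneD m β γ (-(γ/β)) (n:ℝ) hnR hm0 hm1 hβ hγneg rfl
    (fun s : ℝ => u (s • EuclideanSpace.single i0 (1:ℝ))) hUsmooth hUpos hODE ‖x‖ hx
  have hM1 : (fun s : ℝ => u (s • EuclideanSpace.single i0 (1:ℝ))) 1 = M := by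
    show u ((1:ℝ) • EuclideanSpace.single i0 (1:ℝ)) = M
    rw [one_smul]
    exact hM _ hne0
  rw [show u ((1:ℝ) • EuclideanSpace.single i0 (1:ℝ)) = M from hM1] at honeD
  rw [hUx x]
  exact honeD
end
end

section
/- Let n ≥ 3 be an integer, m = (n−2)/(n+2), θ > 0, and s₀ ∈ ℝ. Let v : (−∞, s₀] → ℝ be a smooth positive function with lim_{s→−∞} v(s) = 0, satisfying the ODE (v^m)'' + θ·v' − ((n−2)²/4)·v^m = 0 on (−∞, s₀]. Then v'(s) ≥ 0 for all s ≤ s₀. -/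
open Real MeasureTheory Metric
open scoped Topology RealInnerProductSpace

noncomputable section

/-- the cylindrical conformal factor of a steady soliton is nondecreasing. -/
theorem steady_cylindrical_monotone (n : ℕ) (hn : 3 ≤ n)
    (m θ : ℝ)
    (hm : m = ((n : ℝ) - 2) / ((n : ℝ) + 2))
    (hθ : 0 < θ) (s₀ : ℝ)
    (v : ℝ → ℝ) (hsmooth : ContDiff ℝ (⊤ : ℕ∞) v)
    (hpos : ∀ s, s ≤ s₀ → 0 < v s)
    (hlim : Filter.Tendsto v Filter.atBot (𝓝 0))
    (hode : ∀ s, s ≤ s₀ →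
      deriv (deriv (fun t => v t ^ m)) s + θ * deriv v s
        - ((n : ℝ) - 2) ^ 2 / 4 * v s ^ m = 0) :
    ∀ s, s ≤ s₀ → 0 ≤ deriv v s := by
  have hn3 : (3:ℝ) ≤ (n:ℝ) := by exact_mod_cast hn
  have hm0 : 0 < m := by
    rw [hm]; exact div_pos (by linarith) (by linarith)
  have hc : 0 < ((n:ℝ) - 2) ^ 2 / 4 := by nlinarith
  set w : ℝ → ℝ := fun t => v t ^ m with hw
  set g : ℝ → ℝ := deriv w with hg
  have hderiv : ∀ s, s ≤ s₀ → HasDerivAt w (m * v s ^ (m - 1) * deriv v s) s := by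
    intro s hs
    have hv := (hsmooth.differentiable (by simp) s).hasDerivAt
    have h2 := (Real.hasDerivAt_rpow_const (p := m)
      (Or.inl (hpos s hs).ne')).comp s hv
    simpa [hw, mul_assoc, Function.comp_def] using h2
  have hgformula : ∀ s, s ≤ s₀ → g s = m * v s ^ (m - 1) * deriv v s :=
    fun s hs => (hderiv s hs).deriv
  have hdv_cont : Continuous (deriv v) := hsmooth.continuous_deriv (by exact_mod_cast le_top)
  have hwcont : ContinuousOn w (Set.Iic s₀) :=
    hsmooth.continuous.continuousOn.rpow_const (fun s hs => Or.inl (hpos s hs).ne')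
  have hgcont : ContinuousOn g (Set.Iic s₀) := by
    have h1 : ContinuousOn (fun s => m * v s ^ (m - 1) * deriv v s) (Set.Iic s₀) :=
      (continuousOn_const.mul
        (hsmooth.continuous.continuousOn.rpow_const
          (fun s hs => Or.inl (hpos s hs).ne'))).mul hdv_cont.continuousOn
    exact h1.congr (fun s hs => hgformula s hs)
  have hsign : ∀ s, s ≤ s₀ → g s < 0 → deriv v s < 0 := by
    intro s hs hgs
    by_contra hd
    push_neg at hd
    have hA : 0 < v s ^ (m - 1) := Real.rpow_pos_of_pos (hpos s hs) _
    have := hgformula s hs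
    nlinarith [mul_nonneg (mul_nonneg hm0.le hA.le) hd]
  have hwlim : Filter.Tendsto w Filter.atBot (𝓝 0) := by
    have hca : ContinuousAt (fun x : ℝ => x ^ m) 0 :=
      Real.continuousAt_rpow_const 0 m (Or.inr hm0.le)
    have h3 := hca.tendsto.comp hlim
    simpa [hw, Real.zero_rpow hm0.ne', Function.comp_def] using h3
  intro s₁ hs₁
  by_contra hcon
  push_neg at hcon
  have hA1 : 0 < v s₁ ^ (m - 1) := Real.rpow_pos_of_pos (hpos s₁ hs₁) _
  have hg1 : g s₁ < 0 := by
    rw [hgformula s₁ hs₁]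
    exact mul_neg_of_pos_of_neg (mul_pos hm0 hA1) hcon
  -- find a point far left where w is small, then MVT gives a point where g ≥ 0
  have hws₁ : 0 < w s₁ := Real.rpow_pos_of_pos (hpos s₁ hs₁) m
  obtain ⟨a, haw, ha1⟩ : ∃ a, w a < w s₁ ∧ a < s₁ :=
    ((hwlim.eventually_lt_const hws₁).and (Filter.eventually_lt_atBot s₁)).exists
  obtain ⟨ξ, hξmem, hξd⟩ := exists_deriv_eq_slope w ha1
    (hwcont.mono (fun x hx => le_trans hx.2 hs₁))
    (fun x hx => (hderiv x (le_trans (le_of_lt hx.2) hs₁)).differentiableAt.differentiableWithinAt)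
  have hgξ : 0 ≤ g ξ := by
    rw [hg, hξd]
    exact (div_pos (by linarith) (by linarith)).le
  -- take T = sup of points in [ξ, s₁] where g ≥ 0
  set K : Set ℝ := Set.Icc ξ s₁ ∩ g ⁻¹' Set.Ici 0 with hK
  have hIccsub : Set.Icc ξ s₁ ⊆ Set.Iic s₀ := fun x hx => le_trans hx.2 hs₁
  have hKclosed : IsClosed K :=
    (hgcont.mono hIccsub).preimage_isClosed_of_isClosed isClosed_Icc isClosed_Ici
  have hKcompact : IsCompact K :=
    IsCompact.of_isClosed_subset isCompact_Icc hKclosed Set.inter_subset_left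
  have hKne : K.Nonempty := ⟨ξ, ⟨le_refl ξ, hξmem.2.le⟩, hgξ⟩
  set T : ℝ := sSup K with hT
  have hTK : T ∈ K := hKcompact.sSup_mem hKne
  have hTle : T ≤ s₁ := hTK.1.2
  have hgT : 0 ≤ g T := hTK.2
  have hTne : T ≠ s₁ := by intro he; rw [he] at hgT; linarith
  have hTlt : T < s₁ := lt_of_le_of_ne hTle hTne
  have hξT : ξ ≤ T := hTK.1.1
  -- g is strictly increasing on [T, s₁]
  have hmono : StrictMonoOn g (Set.Icc T s₁) := by
    apply strictMonoOn_of_deriv_pos (convex_Icc T s₁)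
    · exact hgcont.mono (fun x hx => le_trans hx.2 hs₁)
    · intro x hx
      rw [interior_Icc] at hx
      have hxs₀ : x ≤ s₀ := le_trans hx.2.le hs₁
      have hgx : g x < 0 := by
        by_contra hge
        push_neg at hge
        have hxK : x ∈ K := ⟨⟨le_trans hξT hx.1.le, hx.2.le⟩, hge⟩
        exact absurd (le_csSup hKcompact.bddAbove hxK) (not_le.mpr hx.1)
      have hdvx : deriv v x < 0 := hsign x hxs₀ hgx
      have hodex := hode x hxs₀
      have hwx : 0 < v x ^ m := Real.rpow_pos_of_pos (hpos x hxs₀) m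
      have hterm : θ * deriv v x < 0 := mul_neg_of_pos_of_neg hθ hdvx
      have hterm2 : 0 < ((n:ℝ) - 2) ^ 2 / 4 * v x ^ m := mul_pos hc hwx
      have hdg : deriv g x = deriv (deriv w) x := rfl
      rw [hdg]
      linarith
  have := hmono ⟨le_refl T, hTle⟩ ⟨hTlt.le, le_refl s₁⟩ hTlt
  linarith
end
end

section
/- Let n ≥ 3 be an integer, m = (n−2)/(n+2), θ > 0, and s₀ ∈ ℝ. Let v : (−∞, s₀] → ℝ be a smooth positive function with v'(s) ≥ 0 for all s, lim_{s→−∞} v(s) = 0, and lim_{s→−∞} (v^m)'(s) = 0, satisfying the ODE (v^m)'' + θ·v' − ((n−2)²/4)·v^m = 0 on (−∞, s₀]. Then (v^m)'(s) ≤ ((n−2)/2)·v(s)^m for all s ≤ s₀. -/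
open Real MeasureTheory Metric
open scoped Topology RealInnerProductSpace
open scoped ContDiff

noncomputable section

/-- gradient bound (v^m)' ≤ ((n-2)/2)·v^m for steady cylindrical solutions. -/
theorem steady_cylindrical_gradient_bound (n : ℕ) (hn : 3 ≤ n)
    (m θ : ℝ)
    (hm : m = ((n : ℝ) - 2) / ((n : ℝ) + 2))
    (hθ : 0 < θ) (s₀ : ℝ)
    (v : ℝ → ℝ) (hsmooth : ContDiff ℝ (⊤ : ℕ∞) v)
    (hpos : ∀ s, s ≤ s₀ → 0 < v s)
    (hmono : ∀ s, s ≤ s₀ → 0 ≤ deriv v s)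
    (hlim : Filter.Tendsto v Filter.atBot (𝓝 0))
    (hlim' : Filter.Tendsto (deriv (fun t => v t ^ m)) Filter.atBot (𝓝 0))
    (hode : ∀ s, s ≤ s₀ →
      deriv (deriv (fun t => v t ^ m)) s + θ * deriv v s
        - ((n : ℝ) - 2) ^ 2 / 4 * v s ^ m = 0) :
    ∀ s, s ≤ s₀ → deriv (fun t => v t ^ m) s ≤ ((n : ℝ) - 2) / 2 * v s ^ m := by
  have hn3 : (3 : ℝ) ≤ (n : ℝ) := by exact_mod_cast hn
  set c : ℝ := ((n : ℝ) - 2) / 2 with hc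
  have hcpos : 0 < c := by linarith
  have hmpos : 0 < m := by
    rw [hm]; apply div_pos <;> linarith
  set w : ℝ → ℝ := fun t => v t ^ m with hw
  set U : Set ℝ := v ⁻¹' Set.Ioi 0 with hU
  have hUopen : IsOpen U := (isOpen_Ioi).preimage hsmooth.continuous
  have hUsub : Set.Iic s₀ ⊆ U := fun s hs => hpos s hs
  -- w is C^∞ on U
  have hwC : ContDiffOn ℝ (⊤ : ℕ∞) w U := fun x hx =>
    ((hsmooth.contDiffAt).rpow_const_of_ne (ne_of_gt hx)).contDiffWithinAt
  have hwC2 : ContDiffOn ℝ ∞ w U := by exact_mod_cast hwC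
  have hwC' : ContDiffOn ℝ ∞ (deriv w) U :=
    ((contDiffOn_infty_iff_deriv_of_isOpen hUopen).1 hwC2).2
  have hwdiff : ∀ x ∈ U, HasDerivAt w (deriv w x) x := fun x hx => by
    have : DifferentiableAt ℝ w x :=
      (((contDiffOn_infty_iff_deriv_of_isOpen hUopen).1 hwC2).1 x hx).differentiableAt
        (hUopen.mem_nhds hx)
    exact this.hasDerivAt
  have hw'diff : ∀ x ∈ U, HasDerivAt (deriv w) (deriv (deriv w) x) x := fun x hx => by
    have : DifferentiableAt ℝ (deriv w) x :=
      (((contDiffOn_infty_iff_deriv_of_isOpen hUopen).1 hwC').1 x hx).differentiableAt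
        (hUopen.mem_nhds hx)
    exact this.hasDerivAt
  set F : ℝ → ℝ := fun s => Real.exp (c * s) * (deriv w s - c * w s) with hF
  have hFderiv : ∀ x ∈ U, HasDerivAt F
      (Real.exp (c * x) * (deriv (deriv w) x - c ^ 2 * w x)) x := by
    intro x hx
    have he : HasDerivAt (fun s => Real.exp (c * s)) (Real.exp (c * x) * (c * 1)) x :=
      ((hasDerivAt_id x).const_mul c).exp
    have hg : HasDerivAt (fun s => deriv w s - c * w s)
        (deriv (deriv w) x - c * deriv w x) x :=
      (hw'diff x hx).sub ((hwdiff x hx).const_mul c)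
    have : HasDerivAt F (Real.exp (c * x) * (c * 1) * (deriv w x - c * w x)
        + Real.exp (c * x) * (deriv (deriv w) x - c * deriv w x)) x := he.mul hg
    convert this using 1
    ring
  -- F is antitone on Iic s₀
  have hanti : AntitoneOn F (Set.Iic s₀) := by
    apply antitoneOn_of_deriv_nonpos (convex_Iic s₀)
    · exact fun x hx => ((hFderiv x (hUsub hx)).continuousAt).continuousWithinAt
    · intro x hx
      rw [interior_Iic] at hx
      have hxle : x ≤ s₀ := le_of_lt hx
      exact ((hFderiv x (hUsub hxle)).differentiableAt).differentiableWithinAt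
    · intro x hx
      rw [interior_Iic] at hx
      have hxle : x ≤ s₀ := le_of_lt hx
      rw [(hFderiv x (hUsub hxle)).deriv]
      have hodex := hode x hxle
      have : deriv (deriv w) x - c ^ 2 * w x = -(θ * deriv v x) := by
        have hc2 : c ^ 2 = ((n : ℝ) - 2) ^ 2 / 4 := by rw [hc]; ring
        rw [hc2]; simp only [hw]; linarith
      rw [this]
      have hv' := hmono x hxle
      have hexp := Real.exp_pos (c * x)
      nlinarith [mul_nonneg hexp.le (mul_nonneg hθ.le hv')]
  -- F tends to 0 at -∞
  have hFlim : Filter.Tendsto F Filter.atBot (𝓝 0) := by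
    have h1 : Filter.Tendsto (fun t => Real.exp (c * t)) Filter.atBot (𝓝 0) :=
      Real.tendsto_exp_atBot.comp (Filter.tendsto_id.const_mul_atBot hcpos)
    have h3 : Filter.Tendsto w Filter.atBot (𝓝 0) := by
      have := (Real.continuousAt_rpow_const 0 m (Or.inr hmpos.le)).tendsto.comp hlim
      simpa [hw, Real.zero_rpow hmpos.ne', Function.comp_def] using this
    have h2 : Filter.Tendsto (fun t => deriv w t - c * w t) Filter.atBot (𝓝 (0 - c * 0)) :=
      hlim'.sub (h3.const_mul c)
    simpa using h1.mul h2
  -- conclude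
  intro s hs
  have hFs : F s ≤ 0 := by
    refine ge_of_tendsto hFlim ?_
    filter_upwards [Filter.eventually_le_atBot s] with t ht
    exact hanti (le_trans ht hs) hs ht
  have h0 : deriv w s - c * w s ≤ 0 := by
    simp only [hF] at hFs
    nlinarith [Real.exp_pos (c * s)]
  linarith
end
end

section
/- Let n ≥ 6 be an integer, set α = 4/(n−2) (so α ≤ 1), let θ > 0 and s₀ ∈ ℝ. Let w : [s₀, ∞) → ℝ be a smooth positive function with w'(s) ≥ 0 for all s ≥ s₀, satisfying the ODE w'' = ((α−1)/α)·(w')²/w − (α+1)·θ·w'·w + (4/α)·w on [s₀, ∞). Then for all s ≥ s₀, w'(s) ≤ max{ 4/(α(α+1)θ), w'(s₀) }. -/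
open Real MeasureTheory Metric
open scoped Topology RealInnerProductSpace

noncomputable section

/-- derivative bound for the cylindrical conformal factor, n ≥ 6. -/
theorem steady_w_derivative_bound (n : ℕ) (hn : 6 ≤ n)
    (α θ : ℝ)
    (hα : α = 4 / ((n : ℝ) - 2))
    (hθ : 0 < θ) (s₀ : ℝ)
    (w : ℝ → ℝ) (hsmooth : ContDiff ℝ (⊤ : ℕ∞) w)
    (hpos : ∀ s, s₀ ≤ s → 0 < w s)
    (hmono : ∀ s, s₀ ≤ s → 0 ≤ deriv w s)
    (hode : ∀ s, s₀ ≤ s →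
      deriv (deriv w) s = (α - 1) / α * (deriv w s) ^ 2 / w s
        - (α + 1) * θ * deriv w s * w s + 4 / α * w s) :
    ∀ s, s₀ ≤ s → deriv w s ≤ max (4 / (α * (α + 1) * θ)) (deriv w s₀) := by

  intro s hs
  by_contra hcon
  push_neg at hcon
  -- basic facts about α
  have hn2 : (4:ℝ) ≤ (n:ℝ) - 2 := by
    have : (6:ℝ) ≤ (n:ℝ) := by exact_mod_cast hn
    linarith
  have hαpos : 0 < α := by
    rw [hα]; positivity
  have hαle : α ≤ 1 := by
    rw [hα]
    rw [div_le_one (by linarith)]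
    linarith
  set f := deriv w with hf
  have hfC : ContDiff ℝ (⊤ : ℕ∞) f := (contDiff_infty_iff_deriv.mp hsmooth).2
  have hfdiff : Differentiable ℝ f := hfC.differentiable (by simp)
  have hfcont : Continuous f := hfdiff.continuous
  set C := max (4 / (α * (α + 1) * θ)) (f s₀) with hC
  -- the crossing set
  set S := {u : ℝ | u ∈ Set.Icc s₀ s ∧ f u ≤ C} with hS
  have hSne : S.Nonempty := ⟨s₀, ⟨le_refl _, hs⟩, le_max_right _ _⟩
  have hSbdd : BddAbove S := ⟨s, fun u hu => hu.1.2⟩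
  have hSclosed : IsClosed S := by
    have : S = Set.Icc s₀ s ∩ f ⁻¹' (Set.Iic C) := rfl
    rw [this]
    exact isClosed_Icc.inter (isClosed_Iic.preimage hfcont)
  set t := sSup S with ht
  have htS : t ∈ S := hSclosed.csSup_mem hSne hSbdd
  have hts : t < s := lt_of_le_of_ne htS.1.2 (by
    intro h; rw [h] at htS; exact absurd htS.2 (not_le.mpr hcon))
  have hst₀ : s₀ ≤ t := htS.1.1
  -- on (t, s], f > C
  have hgt : ∀ u, t < u → u ≤ s → C < f u := by
    intro u hu1 hu2
    by_contra h
    push_neg at h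
    have : u ∈ S := ⟨⟨le_trans hst₀ hu1.le, hu2⟩, h⟩
    exact absurd (le_csSup hSbdd this) (not_le.mpr hu1)
  -- f' ≤ 0 on (t, s)
  have hderiv : ∀ u ∈ Set.Ioo t s, deriv f u ≤ 0 := by
    intro u hu
    have hus₀ : s₀ ≤ u := le_trans hst₀ hu.1.le
    have hfu : C < f u := hgt u hu.1 hu.2.le
    have hM : 4 / (α * (α + 1) * θ) < f u := lt_of_le_of_lt (le_max_left _ _) hfu
    have hwpos := hpos u hus₀
    have hfnn := hmono u hus₀
    rw [hf, hode u hus₀]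
    have h1 : (α - 1) / α * (f u) ^ 2 / w u ≤ 0 := by
      apply div_nonpos_of_nonpos_of_nonneg _ hwpos.le
      apply mul_nonpos_of_nonpos_of_nonneg _ (sq_nonneg _)
      exact div_nonpos_of_nonpos_of_nonneg (by linarith) hαpos.le
    have h2 : -(α + 1) * θ * f u * w u + 4 / α * w u ≤ 0 := by
      have hkey : 4 / α < (α + 1) * θ * f u := by
        have hd : 0 < α * (α + 1) * θ := by positivity
        rw [div_lt_iff₀ hd] at hM
        rw [div_lt_iff₀ hαpos]
        nlinarith
      nlinarith
    nlinarith
  -- f is antitone on [t, s]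
  have hanti : AntitoneOn f (Set.Icc t s) := by
    apply antitoneOn_of_deriv_nonpos (convex_Icc t s) (hfcont.continuousOn)
    · intro u hu
      exact (hfdiff u).differentiableWithinAt
    · intro u hu
      rw [interior_Icc] at hu
      exact hderiv u hu
  have hle : f s ≤ f t :=
    hanti (Set.left_mem_Icc.mpr hts.le) (Set.right_mem_Icc.mpr hts.le) hts.le
  have : f s ≤ C := le_trans hle htS.2
  exact absurd this (not_le.mpr hcon)
end
end

section
/- Let n ≥ 3 be an integer, m = (n−2)/(n+2), θ > 0, and ρ ∈ {0, 1, −1}; in the case ρ = −1 assume additionally θ > m/(2(n−1)). Let w : ℝ → ℝ be a smooth positive function with w'(s) > 0 for all s, satisfying the ODE w·w'' + ((n−6)/4)·(w')² + (θ/m)·w²·w' + (ρ/(n−1))·w³ − (n−2)·w² = 0 on ℝ. If (w'(s))² − w(s)·w''(s) ≥ 0 for all s ∈ ℝ, then (w'(s))² − w(s)·w''(s) > 0 for all s ∈ ℝ. -/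
open Real MeasureTheory Metric
open scoped Topology RealInnerProductSpace

noncomputable section

/-- strict positivity of the sectional curvature quantity (w')² - w·w''. -/
theorem K0_strictly_positive (n : ℕ) (hn : 3 ≤ n)
    (m θ ρ : ℝ)
    (hm : m = ((n : ℝ) - 2) / ((n : ℝ) + 2))
    (hθ : 0 < θ)
    (hρ : ρ = 0 ∨ ρ = 1 ∨ ρ = -1)
    (hθρ : ρ = -1 → m / (2 * ((n : ℝ) - 1)) < θ)
    (w : ℝ → ℝ) (hsmooth : ContDiff ℝ (⊤ : ℕ∞) w)
    (hpos : ∀ s, 0 < w s)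
    (hmono : ∀ s, 0 < deriv w s)
    (hode : ∀ s : ℝ,
      w s * deriv (deriv w) s + ((n : ℝ) - 6) / 4 * (deriv w s) ^ 2
        + θ / m * (w s) ^ 2 * deriv w s + ρ / ((n : ℝ) - 1) * (w s) ^ 3
        - ((n : ℝ) - 2) * (w s) ^ 2 = 0)
    (hK0 : ∀ s : ℝ, 0 ≤ (deriv w s) ^ 2 - w s * deriv (deriv w) s) :
    ∀ s : ℝ, 0 < (deriv w s) ^ 2 - w s * deriv (deriv w) s := by
  -- basic positivity facts
  have hn' : (3:ℝ) ≤ (n:ℝ) := by exact_mod_cast hn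
  have hm0 : 0 < m := by
    rw [hm]; apply div_pos <;> linarith
  -- the derivative of w is smooth
  have hdw : ContDiff ℝ (⊤ : ℕ∞) (deriv w) := (contDiff_infty_iff_deriv.mp hsmooth).2
  intro s₀
  by_contra hcon
  push_neg at hcon
  have hF0 : (deriv w s₀) ^ 2 - w s₀ * deriv (deriv w) s₀ = 0 :=
    le_antisymm hcon (hK0 s₀)
  -- abbreviations
  set W : ℝ := w s₀ with hWdef
  set v : ℝ := deriv w s₀ with hvdef
  set v' : ℝ := deriv (deriv w) s₀ with hv'def
  have hW0 : 0 < W := hpos s₀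
  have hv0 : 0 < v := hmono s₀
  -- the function G which equals the curvature quantity by the ODE
  set G : ℝ → ℝ := fun s => ((n:ℝ) - 2) / 4 * (deriv w s ^ 2)
      + θ / m * (w s ^ 2 * deriv w s) + ρ / ((n:ℝ) - 1) * (w s ^ 3)
      - ((n:ℝ) - 2) * (w s ^ 2) with hGdef
  have hFG : ∀ s, (deriv w s) ^ 2 - w s * deriv (deriv w) s = G s := by
    intro s
    simp only [hGdef]
    linear_combination -(hode s)
  -- G is nonnegative, vanishing at s₀, hence has a local min there
  have hG0 : G s₀ = 0 := by rw [← hFG]; exact hF0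
  have hmin : IsLocalMin G s₀ := by
    apply Filter.Eventually.of_forall
    intro s
    rw [hG0, ← hFG]
    exact hK0 s
  have hderiv0 : deriv G s₀ = 0 := hmin.deriv_eq_zero
  -- compute the derivative of G at s₀
  have hw' : HasDerivAt w v s₀ := ((hsmooth.differentiable (by simp)) s₀).hasDerivAt
  have hv' : HasDerivAt (deriv w) v' s₀ := ((hdw.differentiable (by simp)) s₀).hasDerivAt
  have hG' : HasDerivAt G (((n:ℝ) - 2) / 4 * (2 * v * v')
      + θ / m * (2 * W * v * v + W ^ 2 * v')
      + ρ / ((n:ℝ) - 1) * (3 * W ^ 2 * v) - ((n:ℝ) - 2) * (2 * W * v)) s₀ := by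
    have h1 := (hv'.pow 2).const_mul (((n:ℝ) - 2) / 4)
    have h2 := ((hw'.pow 2).mul hv').const_mul (θ / m)
    have h3 := (hw'.pow 3).const_mul (ρ / ((n:ℝ) - 1))
    have h4 := (hw'.pow 2).const_mul ((n:ℝ) - 2)
    have h5 := ((h1.add h2).add h3).sub h4
    refine (h5 : HasDerivAt G _ s₀).congr_deriv ?_
    push_cast
    simp only [Pi.pow_apply, hvdef, hWdef]
    ring
  have hE2 : ((n:ℝ) - 2) / 4 * (2 * v * v') + θ / m * (2 * W * v * v + W ^ 2 * v')
      + ρ / ((n:ℝ) - 1) * (3 * W ^ 2 * v) - ((n:ℝ) - 2) * (2 * W * v) = 0 := by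
    rw [← hG'.deriv]; exact hderiv0
  have hE0 : ((n:ℝ) - 2) / 4 * (v ^ 2) + θ / m * (W ^ 2 * v)
      + ρ / ((n:ℝ) - 1) * (W ^ 3) - ((n:ℝ) - 2) * (W ^ 2) = 0 := hG0
  have hE1 : v ^ 2 - W * v' = 0 := hF0
  -- derive v = 2W
  have key : ((n:ℝ) - 2) * v * (4 * W ^ 2 - v ^ 2) = 0 := by
    linear_combination 4 * W * hE2 - 12 * v * hE0
      + (2 * ((n:ℝ) - 2) * v + 4 * (θ / m) * W ^ 2) * hE1
  have hveq : v = 2 * W := by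
    have h1 : ((n:ℝ) - 2) * v ≠ 0 := by
      have h2 : (0:ℝ) < (n:ℝ) - 2 := by linarith
      exact ne_of_gt (by positivity)
    have h2 : 4 * W ^ 2 - v ^ 2 = 0 := by
      rcases mul_eq_zero.mp key with h | h
      · exact absurd h h1
      · exact h
    nlinarith [sq_nonneg (v - 2 * W), sq_nonneg (v + 2 * W)]
  -- plug back into the vanishing of G at s₀
  rw [hveq] at hE0
  have hW3 : (0:ℝ) < W ^ 3 := by positivity
  have hkey2 : 2 * (θ / m) + ρ / ((n:ℝ) - 1) = 0 := by
    have h : (2 * (θ / m) + ρ / ((n:ℝ) - 1)) * W ^ 3 = 0 := by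
      linear_combination hE0
    rcases mul_eq_zero.mp h with h' | h'
    · exact h'
    · exact absurd h' (ne_of_gt hW3)
  have hθm : 0 < θ / m := div_pos hθ hm0
  have hn1 : (0:ℝ) < (n:ℝ) - 1 := by linarith
  rcases hρ with h | h | h
  · rw [h] at hkey2
    simp only [zero_div, add_zero] at hkey2
    linarith
  · rw [h] at hkey2
    have : (0:ℝ) < 1 / ((n:ℝ) - 1) := by positivity
    linarith
  · rw [h] at hkey2
    have hlt := hθρ h
    have hmθ : m < θ * (2 * ((n:ℝ) - 1)) := by
      rw [div_lt_iff₀ (by positivity)] at hlt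
      linarith
    have heq : 2 * θ * ((n:ℝ) - 1) = m := by
      have hmne : m ≠ 0 := ne_of_gt hm0
      have hn1ne : ((n:ℝ) - 1) ≠ 0 := ne_of_gt hn1
      field_simp at hkey2
      linarith
    linarith
end
end

section
/- Let n ≥ 3 be an integer, m = (n−2)/(n+2), θ > 0, and ρ ∈ {0, 1, −1}; in the case ρ = −1 assume additionally θ > m/(2(n−1)). Let w : ℝ → ℝ be a smooth positive function with w'(s) > 0 for all s, satisfying the ODE w·w'' + ((n−6)/4)·(w')² + (θ/m)·w²·w' + (ρ/(n−1))·w³ − (n−2)·w² = 0 on ℝ. If 4·w(s)² − (w'(s))² ≥ 0 for all s ∈ ℝ, then 4·w(s)² − (w'(s))² > 0 for all s ∈ ℝ. -/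
open Real MeasureTheory Metric
open scoped Topology RealInnerProductSpace

noncomputable section

/-- strict positivity of the sectional curvature quantity 4w² - (w')². -/
theorem K1_strictly_positive (n : ℕ) (hn : 3 ≤ n)
    (m θ ρ : ℝ)
    (hm : m = ((n : ℝ) - 2) / ((n : ℝ) + 2))
    (hθ : 0 < θ)
    (hρ : ρ = 0 ∨ ρ = 1 ∨ ρ = -1)
    (hθρ : ρ = -1 → m / (2 * ((n : ℝ) - 1)) < θ)
    (w : ℝ → ℝ) (hsmooth : ContDiff ℝ (⊤ : ℕ∞) w)
    (hpos : ∀ s, 0 < w s)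
    (hmono : ∀ s, 0 < deriv w s)
    (hode : ∀ s : ℝ,
      w s * deriv (deriv w) s + ((n : ℝ) - 6) / 4 * (deriv w s) ^ 2
        + θ / m * (w s) ^ 2 * deriv w s + ρ / ((n : ℝ) - 1) * (w s) ^ 3
        - ((n : ℝ) - 2) * (w s) ^ 2 = 0)
    (hK1 : ∀ s : ℝ, 0 ≤ 4 * (w s) ^ 2 - (deriv w s) ^ 2) :
    ∀ s : ℝ, 0 < 4 * (w s) ^ 2 - (deriv w s) ^ 2 := by
  intro s₀
  rcases lt_or_eq_of_le (hK1 s₀) with h | h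
  · exact h
  exfalso
  -- basic facts
  have hn3 : (3:ℝ) ≤ (n:ℝ) := by exact_mod_cast hn
  have hmpos : 0 < m := by
    rw [hm]; apply div_pos <;> linarith
  have hdw : Differentiable ℝ w := hsmooth.differentiable (by simp)
  have hdw2 : Differentiable ℝ (deriv w) :=
    ((contDiff_infty_iff_deriv.mp hsmooth).2).differentiable (by simp)
  -- w'(s₀) = 2 w(s₀)
  have h1 : deriv w s₀ = 2 * w s₀ := by
    have h2 : (deriv w s₀)^2 = (2 * w s₀)^2 := by nlinarith [hK1 s₀]
    have := hmono s₀; have := hpos s₀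
    nlinarith [sq_nonneg (deriv w s₀ - 2 * w s₀), sq_nonneg (deriv w s₀ + 2 * w s₀)]
  -- F has a local min at s₀
  have hmin : IsLocalMin (fun s => 4 * (w s) ^ 2 - (deriv w s) ^ 2) s₀ := by
    apply Filter.Eventually.of_forall
    intro s; simp only; rw [← h]; exact hK1 s
  have hF : HasDerivAt (fun s => 4 * (w s) ^ 2 - (deriv w s) ^ 2)
      (4 * (2 * w s₀ ^ 1 * deriv w s₀) - 2 * deriv w s₀ ^ 1 * deriv (deriv w) s₀) s₀ := by
    have hw : HasDerivAt w (deriv w s₀) s₀ := (hdw s₀).hasDerivAt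
    have hw' : HasDerivAt (deriv w) (deriv (deriv w) s₀) s₀ := (hdw2 s₀).hasDerivAt
    exact ((hw.pow 2).const_mul 4).sub (hw'.pow 2)
  have hF0 : 4 * (2 * w s₀ ^ 1 * deriv w s₀) - 2 * deriv w s₀ ^ 1 * deriv (deriv w) s₀ = 0 := by
    have := hmin.deriv_eq_zero
    rwa [hF.deriv] at this
  simp only [pow_one] at hF0
  -- w''(s₀) = 4 w(s₀)
  have hw'' : deriv (deriv w) s₀ = 4 * w s₀ := by
    have hm0 := hmono s₀
    have : 2 * deriv w s₀ * (deriv (deriv w) s₀ - 4 * w s₀) = 0 := by ring_nf; ring_nf at hF0; linarith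
    rcases mul_eq_zero.mp this with h' | h'
    · linarith
    · linarith
  -- plug into ODE
  have hode0 := hode s₀
  rw [h1, hw''] at hode0
  have hw0 := hpos s₀
  have hkey : 2 * θ / m + ρ / ((n:ℝ) - 1) = 0 := by
    have h3 : (2 * θ / m + ρ / ((n:ℝ) - 1)) * (w s₀) ^ 3 = 0 := by
      linear_combination hode0
    rcases mul_eq_zero.mp h3 with h' | h'
    · exact h'
    · exact absurd h' (pow_ne_zero 3 (ne_of_gt hw0))
  have hn1 : (0:ℝ) < (n:ℝ) - 1 := by linarith
  rcases hρ with rfl | rfl | rfl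
  · rw [zero_div, add_zero] at hkey
    have : 0 < 2 * θ / m := by positivity
    linarith
  · have h2 : 0 < 2 * θ / m := by positivity
    have h3 : 0 < 1 / ((n:ℝ) - 1) := by positivity
    linarith
  · have hθ2 := hθρ rfl
    have : 2 * θ / m = 1 / ((n:ℝ) - 1) := by
      have : (-1:ℝ) / ((n:ℝ) - 1) = - (1 / ((n:ℝ)-1)) := by ring
      rw [this] at hkey; linarith
    have : θ = m / (2 * ((n:ℝ) - 1)) := by
      field_simp at this ⊢; linarith
    linarith
end
end
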